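/- arXiv:1412.0186 — 10 statements merged into one kernel-verified Lean document; each statement's English description precedes it below -/
import Mathlib

section
/- Let p be a prime and let 1 → A → B →(λ) C → 1 be a split short exact sequence with section σ : C → B such that B is a p-almost direct product of A and C. Set C' = σ(C) ⊆ B. Then for all integers m, n ≥ 1 one has [γ_m^p C', γ_n^p A] ⊆ γ_{m+n}^p A, where the commutator subgroup [γ_m^p C', γ_n^p A] is taken inside B (A being normal in B) and the filtrations γ_•^p C' and γ_•^p A are the lower F_p-linear central filtrations of the groups C' and A. -/
open scoped commutatorElement

/-- The lower `F_p`-linear central filtration `(γₙᵖ G)ₙ` of a group `G`: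
`gammaP p 1 = ⊤` (i.e. `γ₁ᵖ G = G`) and `γ_{n+1}ᵖ G` is the subgroup generated by
`[G, γₙᵖ G] ∪ {xᵖ : x ∈ γₙᵖ G}`.  (The value at `0` is junk, set to `⊤`.) -/
def gammaP (p : ℕ) {G : Type*} [Group G] : ℕ → Subgroup G
  | 0 => ⊤
  | 1 => ⊤
  | n + 2 =>
    Subgroup.closure
      ({x : G | ∃ g y : G, y ∈ gammaP p (n + 1) ∧ x = ⁅g, y⁆} ∪
       {x : G | ∃ y : G, y ∈ gammaP p (n + 1) ∧ x = y ^ p})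


lemma gammaP_succ_succ (p : ℕ) {G : Type*} [Group G] (n : ℕ) :
    (gammaP p (n + 2) : Subgroup G) =
    Subgroup.closure
      ({x : G | ∃ g y : G, y ∈ gammaP p (n + 1) ∧ x = ⁅g, y⁆} ∪
       {x : G | ∃ y : G, y ∈ gammaP p (n + 1) ∧ x = y ^ p}) := rfl

lemma gammaP_comm_mem (p : ℕ) {G : Type*} [Group G] (n : ℕ) (g y : G)
    (hy : y ∈ (gammaP p n : Subgroup G)) : ⁅g, y⁆ ∈ (gammaP p (n + 1) : Subgroup G) := by
  cases n with
  | zero => exact Subgroup.mem_top _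
  | succ n =>
    rw [gammaP_succ_succ]
    exact Subgroup.subset_closure (Or.inl ⟨g, y, hy, rfl⟩)

lemma gammaP_comm_mem' (p : ℕ) {G : Type*} [Group G] (n : ℕ) (g y : G)
    (hy : y ∈ (gammaP p n : Subgroup G)) : ⁅y, g⁆ ∈ (gammaP p (n + 1) : Subgroup G) := by
  rw [← commutatorElement_inv]
  exact inv_mem (gammaP_comm_mem p n g y hy)

lemma gammaP_pow_mem (p : ℕ) {G : Type*} [Group G] (n : ℕ) (y : G)
    (hy : y ∈ (gammaP p n : Subgroup G)) : y ^ p ∈ (gammaP p (n + 1) : Subgroup G) := by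
  cases n with
  | zero => exact Subgroup.mem_top _
  | succ n =>
    rw [gammaP_succ_succ]
    exact Subgroup.subset_closure (Or.inr ⟨y, hy, rfl⟩)

lemma gammaP_map (p : ℕ) {G H : Type*} [Group G] [Group H] (φ : G →* H) :
    ∀ n, (gammaP p n : Subgroup G).map φ ≤ (gammaP p n : Subgroup H) := by
  intro n
  induction n with
  | zero => exact le_top
  | succ n ih =>
    cases n with
    | zero => exact le_top
    | succ k =>
      rw [gammaP_succ_succ, Subgroup.map_le_iff_le_comap, Subgroup.closure_le]
      rintro x (⟨g, y, hy, rfl⟩ | ⟨y, hy, rfl⟩) <;>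
        simp only [SetLike.mem_coe, Subgroup.mem_comap]
      · rw [map_commutatorElement]
        exact gammaP_comm_mem p (k + 1) _ _ (ih (Subgroup.mem_map_of_mem φ hy))
      · rw [map_pow]
        exact gammaP_pow_mem p (k + 1) _ (ih (Subgroup.mem_map_of_mem φ hy))

instance gammaP_normal (p n : ℕ) {G : Type*} [Group G] : (gammaP p n : Subgroup G).Normal := by
  constructor
  intro x hx g
  have := gammaP_map p (MulAut.conj g).toMonoidHom n (Subgroup.mem_map_of_mem _ hx)
  simpa using this

lemma gammaP_succ_le (p : ℕ) {G : Type*} [Group G] (n : ℕ) :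
    (gammaP p (n + 1) : Subgroup G) ≤ gammaP p n := by
  cases n with
  | zero => exact le_top
  | succ n =>
    rw [gammaP_succ_succ, Subgroup.closure_le]
    rintro x (⟨g, y, hy, rfl⟩ | ⟨y, hy, rfl⟩) <;> simp only [SetLike.mem_coe]
    · have h : ⁅g, y⁆ = (g * y * g⁻¹) * y⁻¹ := by group
      rw [h]
      exact mul_mem ((gammaP_normal p (n+1)).conj_mem y hy g) (inv_mem hy)
    · exact pow_mem hy p

lemma gammaP_le (p : ℕ) {G : Type*} [Group G] {m n : ℕ} (h : m ≤ n) :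
    (gammaP p n : Subgroup G) ≤ gammaP p m := by
  induction n, h using Nat.le_induction with
  | base => exact le_rfl
  | succ n hn ih => exact (gammaP_succ_le p n).trans ih
section HW
variable {G : Type*} [Group G]

lemma hallWitt_mem (N : Subgroup G) (hN : N.Normal) (x y z : G)
    (h1 : ⁅y, ⁅z⁻¹, x⁻¹⁆⁆ ∈ N) (h2 : ⁅x⁻¹, ⁅y⁻¹, z⁆⁆ ∈ N) : ⁅z, ⁅x, y⁆⁆ ∈ N := by
  have key : ⁅z, ⁅x, y⁆⁆ =
      x * (z * ⁅y, ⁅z⁻¹, x⁻¹⁆⁆⁻¹ * z⁻¹ * (y * ⁅x⁻¹, ⁅y⁻¹, z⁆⁆⁻¹ * y⁻¹)) * x⁻¹ := by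
    group
  rw [key]
  exact hN.conj_mem _
    (N.mul_mem (hN.conj_mem _ (N.inv_mem h1) z) (hN.conj_mem _ (N.inv_mem h2) y)) x

lemma commutator_mul_left' (a b y : G) : ⁅a * b, y⁆ = a * ⁅b, y⁆ * a⁻¹ * ⁅a, y⁆ := by group

lemma commutator_mul_right' (x a b : G) : ⁅x, a * b⁆ = ⁅x, a⁆ * (a * ⁅x, b⁆ * a⁻¹) := by group

lemma commutator_pow_left' (x y : G) (h : Commute x ⁅x, y⁆) :
    ∀ k : ℕ, ⁅x ^ k, y⁆ = ⁅x, y⁆ ^ k := by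
  intro k
  induction k with
  | zero => rw [pow_zero, pow_zero]; group
  | succ k ih =>
    rw [pow_succ', commutator_mul_left', ih, (h.pow_right k).eq, pow_succ]
    group

lemma commutator_pow_right' (x y : G) (h : Commute y ⁅x, y⁆) :
    ∀ k : ℕ, ⁅x, y ^ k⁆ = ⁅x, y⁆ ^ k := by
  intro k
  induction k with
  | zero => rw [pow_zero, pow_zero]; group
  | succ k ih =>
    rw [pow_succ', commutator_mul_right', ih, (h.pow_right k).eq, mul_inv_cancel_right,
      ← pow_succ']
end HW

section ModN
variable {G : Type*} [Group G]

lemma mk'_eq_one_iff' (N : Subgroup G) [N.Normal] (z : G) :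
    QuotientGroup.mk' N z = 1 ↔ z ∈ N := by
  rw [← MonoidHom.mem_ker, QuotientGroup.ker_mk']

lemma pow_left_mem_of_comm (N : Subgroup G) (hN : N.Normal) (x y : G) (k : ℕ)
    (h1 : ⁅x, ⁅x, y⁆⁆ ∈ N) (h2 : ⁅x, y⁆ ^ k ∈ N) : ⁅x ^ k, y⁆ ∈ N := by
  haveI := hN
  set π := QuotientGroup.mk' N with hπ
  have hc : Commute (π x) ⁅π x, π y⁆ := by
    apply commutatorElement_eq_one_iff_commute.mp
    rw [← map_commutatorElement, ← map_commutatorElement]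
    exact (mk'_eq_one_iff' N _).mpr h1
  rw [← mk'_eq_one_iff' N]
  rw [map_commutatorElement, map_pow, commutator_pow_left' _ _ hc, ← map_commutatorElement,
    ← map_pow]
  exact (mk'_eq_one_iff' N _).mpr h2

lemma pow_right_mem_of_comm (N : Subgroup G) (hN : N.Normal) (x y : G) (k : ℕ)
    (h1 : ⁅y, ⁅x, y⁆⁆ ∈ N) (h2 : ⁅x, y⁆ ^ k ∈ N) : ⁅x, y ^ k⁆ ∈ N := by
  haveI := hN
  set π := QuotientGroup.mk' N with hπ
  have hc : Commute (π y) ⁅π x, π y⁆ := by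
    apply commutatorElement_eq_one_iff_commute.mp
    rw [← map_commutatorElement, ← map_commutatorElement]
    exact (mk'_eq_one_iff' N _).mpr h1
  rw [← mk'_eq_one_iff' N]
  rw [map_commutatorElement, map_pow, commutator_pow_right' _ _ hc, ← map_commutatorElement,
    ← map_pow]
  exact (mk'_eq_one_iff' N _).mpr h2

def goodLeft (K N : Subgroup G) (hN : N.Normal) : Subgroup G where
  carrier := {x | ∀ z ∈ K, ⁅x, z⁆ ∈ N}
  one_mem' := by
    intro z _
    have h : ⁅(1 : G), z⁆ = 1 := by group
    rw [h]; exact N.one_mem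
  mul_mem' := by
    intro a b ha hb z hz
    rw [commutator_mul_left' a b z]
    exact N.mul_mem (hN.conj_mem _ (hb z hz) a) (ha z hz)
  inv_mem' := by
    intro a ha z hz
    have h : ⁅a⁻¹, z⁆ = a⁻¹ * ⁅a, z⁆⁻¹ * (a⁻¹)⁻¹ := by group
    rw [h]
    exact hN.conj_mem _ (N.inv_mem (ha z hz)) a⁻¹

lemma goodLeft_mem (K N : Subgroup G) (hN : N.Normal) (x : G) :
    x ∈ goodLeft K N hN ↔ ∀ z ∈ K, ⁅x, z⁆ ∈ N := Iff.rfl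

def goodRight (K N : Subgroup G) (hN : N.Normal) : Subgroup G where
  carrier := {z | ∀ x ∈ K, ⁅x, z⁆ ∈ N}
  one_mem' := by
    intro x _
    have h : ⁅x, (1 : G)⁆ = 1 := by group
    rw [h]; exact N.one_mem
  mul_mem' := by
    intro a b ha hb x hx
    rw [commutator_mul_right' x a b]
    exact N.mul_mem (ha x hx) (hN.conj_mem _ (hb x hx) a)
  inv_mem' := by
    intro a ha x hx
    have h : ⁅x, a⁻¹⁆ = a⁻¹ * ⁅x, a⁆⁻¹ * (a⁻¹)⁻¹ := by group
    rw [h]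
    exact hN.conj_mem _ (N.inv_mem (ha x hx)) a⁻¹

lemma goodRight_mem (K N : Subgroup G) (hN : N.Normal) (z : G) :
    z ∈ goodRight K N hN ↔ ∀ x ∈ K, ⁅x, z⁆ ∈ N := Iff.rfl
end ModN

theorem gammaP_comm (p : ℕ) {G : Type*} [Group G] :
    ∀ j k : ℕ, ⁅(gammaP p j : Subgroup G), (gammaP p k : Subgroup G)⁆ ≤ gammaP p (j + k) := by
  intro j
  induction j with
  | zero =>
    intro k
    rw [Nat.zero_add]
    exact Subgroup.commutator_le.mpr fun x _ y hy =>
      gammaP_succ_le p k (gammaP_comm_mem p k x y hy)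
  | succ i ih =>
    cases i with
    | zero =>
      intro k
      rw [show 0 + 1 + k = k + 1 from by omega]
      exact Subgroup.commutator_le.mpr fun x _ y hy => gammaP_comm_mem p k x y hy
    | succ i0 =>
      intro k
      rw [show i0 + 1 + 1 + k = i0 + 2 + k from by omega,
        show i0 + 1 + 1 = i0 + 2 from by omega]
      have hN : (gammaP p (i0 + 2 + k) : Subgroup G).Normal := gammaP_normal p _
      suffices hs : (gammaP p (i0 + 2) : Subgroup G) ≤
          goodLeft (gammaP p k) (gammaP p (i0 + 2 + k)) hN by
        exact Subgroup.commutator_le.mpr fun x hx y hy => (goodLeft_mem _ _ _ _).mp (hs hx) y hy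
      rw [gammaP_succ_succ, Subgroup.closure_le]
      rintro x (⟨g, w, hw, rfl⟩ | ⟨w, hw, rfl⟩) <;> simp only [SetLike.mem_coe] <;>
        rw [goodLeft_mem] <;> intro z hz
      · -- commutator generator ⁅g, w⁆ with w ∈ γ_{i0+1}
        have h0 : ⁅z, ⁅g, w⁆⁆ ∈ (gammaP p (i0 + 2 + k) : Subgroup G) := by
          apply hallWitt_mem _ hN g w z
          · -- ⁅w, ⁅z⁻¹, g⁻¹⁆⁆
            have hin : ⁅z⁻¹, g⁻¹⁆ ∈ (gammaP p (k + 1) : Subgroup G) :=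
              gammaP_comm_mem' p k g⁻¹ z⁻¹ (inv_mem hz)
            have := ih (k + 1) (Subgroup.commutator_mem_commutator hw hin)
            exact gammaP_le p (by omega) this
          · -- ⁅g⁻¹, ⁅w⁻¹, z⁆⁆
            have hin : ⁅w⁻¹, z⁆ ∈ (gammaP p (i0 + 1 + k) : Subgroup G) :=
              ih k (Subgroup.commutator_mem_commutator (inv_mem hw) hz)
            exact gammaP_le p (by omega) (gammaP_comm_mem p (i0 + 1 + k) g⁻¹ _ hin)
        rw [← commutatorElement_inv]
        exact inv_mem h0
      · -- power generator w ^ p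
        have h1 : ⁅w, z⁆ ∈ (gammaP p (i0 + 1 + k) : Subgroup G) :=
          ih k (Subgroup.commutator_mem_commutator hw hz)
        apply pow_left_mem_of_comm _ hN
        · exact gammaP_le p (by omega) (ih (i0 + 1 + k) (Subgroup.commutator_mem_commutator hw h1))
        · exact gammaP_le p (by omega) (gammaP_pow_mem p (i0 + 1 + k) _ h1)

/-- If `B` is a `p`-almost direct product of `A = ker f` and `C` (with section `s`), and
`C' = s(C)`, then `[γₘᵖ C', γₙᵖ A] ⊆ γ_{m+n}ᵖ A` inside `B`, for all `m, n ≥ 1`. -/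
theorem statement1 (p : ℕ) (hp : p.Prime)
    {B C : Type*} [Group B] [Group C]
    (f : B →* C) (hf : Function.Surjective f)
    (s : C →* B) (hs : ∀ c, f (s c) = c)
    (hadp : ∀ a ∈ f.ker, ∀ c : C,
      s c * a * (s c)⁻¹ * a⁻¹ ∈ (gammaP p 2 : Subgroup ↥f.ker).map f.ker.subtype) :
    ∀ m n : ℕ, 1 ≤ m → 1 ≤ n →
      ⁅(gammaP p m : Subgroup ↥s.range).map s.range.subtype,
        (gammaP p n : Subgroup ↥f.ker).map f.ker.subtype⁆ ≤
      (gammaP p (m + n) : Subgroup ↥f.ker).map f.ker.subtype := by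
  let A : ℕ → Subgroup B := fun k => (gammaP p k : Subgroup ↥f.ker).map f.ker.subtype
  let Gm : ℕ → Subgroup B := fun k => (gammaP p k : Subgroup ↥s.range).map s.range.subtype
  have hAnorm : ∀ k, (A k).Normal := by
    intro k
    constructor
    intro x hx b
    rw [Subgroup.mem_map] at hx
    obtain ⟨y, hy, rfl⟩ := hx
    have hb : ∀ a : ↥f.ker, b * (a : B) * b⁻¹ ∈ f.ker := by
      intro a
      have ha : f (a : B) = 1 := a.2
      simp [MonoidHom.mem_ker, ha]
    let φ : ↥f.ker →* ↥f.ker :=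
      { toFun := fun a => ⟨b * (a : B) * b⁻¹, hb a⟩
        map_one' := by ext; simp
        map_mul' := by
          intro a₁ a₂
          ext
          show b * ((a₁ : B) * (a₂ : B)) * b⁻¹ = (b * (a₁ : B) * b⁻¹) * (b * (a₂ : B) * b⁻¹)
          group }
    exact ⟨φ y, gammaP_map p φ k (Subgroup.mem_map_of_mem φ hy), rfl⟩
  have hAmono : ∀ {j k : ℕ}, j ≤ k → A k ≤ A j := fun h => Subgroup.map_mono (gammaP_le p h)
  have hAcomm : ∀ j k : ℕ, ⁅A j, A k⁆ ≤ A (j + k) := by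
    intro j k
    show ⁅(gammaP p j : Subgroup ↥f.ker).map f.ker.subtype,
      (gammaP p k : Subgroup ↥f.ker).map f.ker.subtype⁆ ≤ _
    rw [← Subgroup.map_commutator]
    exact Subgroup.map_mono (gammaP_comm p j k)
  have hApow : ∀ (k : ℕ) (x : B), x ∈ A k → x ^ p ∈ A (k + 1) := by
    intro k x hx
    rw [Subgroup.mem_map] at hx
    obtain ⟨y, hy, rfl⟩ := hx
    exact ⟨y ^ p, gammaP_pow_mem p k y hy, map_pow _ y p⟩
  have hG1 : ∀ g : ↥s.range, (g : B) ∈ Gm 1 := fun g =>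
    Subgroup.mem_map_of_mem _ (Subgroup.mem_top g)
  have hA1 : ∀ a : ↥f.ker, (a : B) ∈ A 1 := fun a =>
    Subgroup.mem_map_of_mem _ (Subgroup.mem_top a)
  have hT11 : ⁅Gm 1, A 1⁆ ≤ A 2 := by
    rw [Subgroup.commutator_le]
    intro g hg a ha
    rw [Subgroup.mem_map] at hg ha
    obtain ⟨y, -, rfl⟩ := hg
    obtain ⟨z, -, rfl⟩ := ha
    obtain ⟨c, hc⟩ := y.2
    have h := hadp (z : B) z.2 c
    rw [hc] at h
    show ⁅(y : B), (z : B)⁆ ∈ A 2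
    rw [commutatorElement_def]
    exact h
  have hT1 : ∀ n : ℕ, ⁅Gm 1, A n⁆ ≤ A (n + 1) := by
    intro n
    induction n with
    | zero => exact le_trans hT11 (hAmono (by omega))
    | succ n ih =>
      cases n with
      | zero => exact hT11
      | succ n0 =>
        show ⁅Gm 1, A (n0 + 2)⁆ ≤ A (n0 + 3)
        have hN := hAnorm (n0 + 3)
        have key : A (n0 + 2) ≤ goodRight (Gm 1) (A (n0 + 3)) hN := by
          show Subgroup.map f.ker.subtype (gammaP p (n0 + 2)) ≤ _
          rw [gammaP_succ_succ, Subgroup.map_le_iff_le_comap, Subgroup.closure_le]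
          rintro x (⟨a, w, hw, rfl⟩ | ⟨w, hw, rfl⟩) <;>
            simp only [SetLike.mem_coe, Subgroup.mem_comap] <;> rw [goodRight_mem] <;>
            intro γ hγ
          · rw [map_commutatorElement]
            have hwA : (w : B) ∈ A (n0 + 1) := Subgroup.mem_map_of_mem _ hw
            apply hallWitt_mem _ hN _ _ γ
            · have hin : ⁅γ⁻¹, ((a : B))⁻¹⁆ ∈ A 2 :=
                hT11 (Subgroup.commutator_mem_commutator (inv_mem hγ) (inv_mem (hA1 a)))
              exact hAmono (by omega)
                (hAcomm (n0 + 1) 2 (Subgroup.commutator_mem_commutator hwA hin))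
            · have hin : ⁅((w : B))⁻¹, γ⁆ ∈ A (n0 + 2) := by
                rw [← commutatorElement_inv]
                exact inv_mem (ih (Subgroup.commutator_mem_commutator hγ (inv_mem hwA)))
              exact hAmono (by omega)
                (hAcomm 1 (n0 + 2) (Subgroup.commutator_mem_commutator (inv_mem (hA1 a)) hin))
          · rw [map_pow]
            have hwA : (w : B) ∈ A (n0 + 1) := Subgroup.mem_map_of_mem _ hw
            have h1 : ⁅γ, (w : B)⁆ ∈ A (n0 + 2) :=
              ih (Subgroup.commutator_mem_commutator hγ hwA)
            apply pow_right_mem_of_comm _ hN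
            · exact hAmono (by omega)
                (hAcomm (n0 + 1) (n0 + 2) (Subgroup.commutator_mem_commutator hwA h1))
            · exact hAmono (by omega) (hApow (n0 + 2) _ h1)
        exact Subgroup.commutator_le.mpr fun γ hγ x hx => (goodRight_mem _ _ _ _).mp (key hx) γ hγ
  have hTm : ∀ m : ℕ, ∀ n : ℕ, ⁅Gm (m + 1), A n⁆ ≤ A (m + 1 + n) := by
    intro m
    induction m with
    | zero =>
      intro n
      rw [show 0 + 1 + n = n + 1 from by omega]
      exact hT1 n
    | succ m ih =>
      intro n
      show ⁅Gm (m + 2), A n⁆ ≤ A (m + 2 + n)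
      have hN := hAnorm (m + 2 + n)
      have key : Gm (m + 2) ≤ goodLeft (A n) (A (m + 2 + n)) hN := by
        show Subgroup.map s.range.subtype (gammaP p (m + 2)) ≤ _
        rw [gammaP_succ_succ, Subgroup.map_le_iff_le_comap, Subgroup.closure_le]
        rintro x (⟨g, w, hw, rfl⟩ | ⟨w, hw, rfl⟩) <;>
          simp only [SetLike.mem_coe, Subgroup.mem_comap] <;> rw [goodLeft_mem] <;> intro a ha
        · rw [map_commutatorElement]
          have hwG : (w : B) ∈ Gm (m + 1) := Subgroup.mem_map_of_mem _ hw
          have h0 : ⁅a, ⁅(s.range.subtype g : B), s.range.subtype w⁆⁆ ∈ A (m + 2 + n) := by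
            apply hallWitt_mem _ hN _ _ a
            · have hin : ⁅a⁻¹, ((g : B))⁻¹⁆ ∈ A (n + 1) := by
                rw [← commutatorElement_inv]
                exact inv_mem (hT1 n
                  (Subgroup.commutator_mem_commutator (inv_mem (hG1 g)) (inv_mem ha)))
              exact hAmono (by omega) (ih (n + 1) (Subgroup.commutator_mem_commutator hwG hin))
            · have hin : ⁅((w : B))⁻¹, a⁆ ∈ A (m + 1 + n) :=
                ih n (Subgroup.commutator_mem_commutator (inv_mem hwG) ha)
              exact hAmono (by omega)
                (hT1 (m + 1 + n) (Subgroup.commutator_mem_commutator (inv_mem (hG1 g)) hin))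
          rw [← commutatorElement_inv]
          exact inv_mem h0
        · rw [map_pow]
          have hwG : (w : B) ∈ Gm (m + 1) := Subgroup.mem_map_of_mem _ hw
          have h1 : ⁅(w : B), a⁆ ∈ A (m + 1 + n) :=
            ih n (Subgroup.commutator_mem_commutator hwG ha)
          apply pow_left_mem_of_comm _ hN
          · exact hAmono (by omega)
              (ih (m + 1 + n) (Subgroup.commutator_mem_commutator hwG h1))
          · exact hAmono (by omega) (hApow (m + 1 + n) _ h1)
      exact Subgroup.commutator_le.mpr fun x hx a ha => (goodLeft_mem _ _ _ _).mp (key hx) a ha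
  intro m n hm hn
  obtain ⟨m0, rfl⟩ : ∃ m0, m = m0 + 1 := ⟨m - 1, by omega⟩
  exact hTm m0 n
end

section
/- Let p be a prime and let 1 → A → B →(λ) C → 1 be a split short exact sequence with section σ : C → B such that B is a p-almost direct product of A and C. Then for every n ≥ 1 the restrictions of λ and σ give a split short exact sequence 1 → γ_n^p A → γ_n^p B →(λ_n) γ_n^p C → 1; in particular λ(γ_n^p B) = γ_n^p C, σ(γ_n^p C) ⊆ γ_n^p B, and A ∩ γ_n^p B = γ_n^p A. -/
open scoped commutatorElement

namespace GammaPAux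

open Subgroup

variable {G H : Type*} [Group G] [Group H] (p : ℕ)

lemma comm_mul_right (x y z : G) : ⁅x, y*z⁆ = ⁅x,y⁆ * (y * ⁅x,z⁆ * y⁻¹) := by
  simp only [commutatorElement_def]; group

lemma comm_mul_left (x y z : G) : ⁅x*y, z⁆ = (x * ⁅y,z⁆ * x⁻¹) * ⁅x,z⁆ := by
  simp only [commutatorElement_def]; group

lemma comm_inv_right (x y : G) : ⁅x, y⁻¹⁆ = y⁻¹ * ⁅x,y⁆⁻¹ * y := by
  simp only [commutatorElement_def]; group

lemma comm_inv_left (x y : G) : ⁅x⁻¹, y⁆ = x⁻¹ * ⁅x,y⁆⁻¹ * x := by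
  simp only [commutatorElement_def]; group

/-- A Hall–Witt style identity. -/
lemma hallWitt (x y z : G) :
    ⁅⁅x,y⁆,z⁆ = x * (y * ⁅⁅y⁻¹,z⁆,x⁻¹⁆⁻¹ * y⁻¹) * ((z * ⁅⁅z⁻¹,x⁻¹⁆,y⁆⁻¹ * z⁻¹) * x⁻¹) := by
  simp only [commutatorElement_def]; group

lemma comm_eq_commutator (g a y : G) :
    ⁅g, ⁅a,y⁆⁆ = ⁅⁅g,a⁆*a, ⁅g,y⁆*y⁆ * ⁅a,y⁆⁻¹ := by
  simp only [commutatorElement_def]; group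

lemma conj_eq_mul_comm (a w : G) : a * w * a⁻¹ = w * ⁅w⁻¹, a⁆ := by
  simp only [commutatorElement_def]; group
lemma gammaP_def (n : ℕ) :
    (gammaP p (n+2) : Subgroup G) = Subgroup.closure
      ({x : G | ∃ g y : G, y ∈ gammaP p (n + 1) ∧ x = ⁅g, y⁆} ∪
       {x : G | ∃ y : G, y ∈ gammaP p (n + 1) ∧ x = y ^ p}) := rfl

lemma comm_mem_gammaP {n : ℕ} (g : G) {y : G} (hy : y ∈ (gammaP p (n+1) : Subgroup G)) :
    ⁅g, y⁆ ∈ (gammaP p (n+2) : Subgroup G) :=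
  subset_closure (Or.inl ⟨g, y, hy, rfl⟩)

lemma pow_mem_gammaP {n : ℕ} {y : G} (hy : y ∈ (gammaP p (n+1) : Subgroup G)) :
    y ^ p ∈ (gammaP p (n+2) : Subgroup G) :=
  subset_closure (Or.inr ⟨y, hy, rfl⟩)

lemma comm_mem_gammaP' {n : ℕ} {y : G} (hy : y ∈ (gammaP p (n+1) : Subgroup G)) (g : G) :
    ⁅y, g⁆ ∈ (gammaP p (n+2) : Subgroup G) := by
  have := inv_mem (comm_mem_gammaP p g hy)
  rwa [commutatorElement_inv] at this

lemma gammaP_map_le (φ : G →* H) : ∀ n, (gammaP p n : Subgroup G).map φ ≤ gammaP p n := by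
  intro n
  induction n using Nat.twoStepInduction with
  | zero => exact le_top
  | one => exact le_top
  | more n _ ih =>
    rw [gammaP_def, MonoidHom.map_closure]
    refine (closure_le _).2 ?_
    rintro _ ⟨x, hx, rfl⟩
    rcases hx with ⟨g, y, hy, rfl⟩ | ⟨y, hy, rfl⟩
    · have hy' : φ y ∈ (gammaP p (n+1) : Subgroup H) := ih ⟨y, hy, rfl⟩
      rw [map_commutatorElement]
      exact comm_mem_gammaP p (φ g) hy'
    · have hy' : φ y ∈ (gammaP p (n+1) : Subgroup H) := ih ⟨y, hy, rfl⟩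
      rw [map_pow]
      exact pow_mem_gammaP p hy'

lemma gammaP_map_eq (φ : G →* H) (hφ : Function.Surjective φ) :
    ∀ n, (gammaP p n : Subgroup G).map φ = gammaP p n := by
  intro n
  induction n using Nat.twoStepInduction with
  | zero => exact Subgroup.map_top_of_surjective φ hφ
  | one => exact Subgroup.map_top_of_surjective φ hφ
  | more n _ ih =>
    refine le_antisymm (gammaP_map_le p φ _) ?_
    rw [gammaP_def (G := H)]
    refine (closure_le _).2 ?_
    rintro x (⟨g, y, hy, rfl⟩ | ⟨y, hy, rfl⟩)
    · rw [← ih] at hy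
      obtain ⟨y', hy', rfl⟩ := hy
      obtain ⟨g', rfl⟩ := hφ g
      exact ⟨⁅g', y'⁆, comm_mem_gammaP p g' hy', map_commutatorElement φ g' y'⟩
    · rw [← ih] at hy
      obtain ⟨y', hy', rfl⟩ := hy
      exact ⟨y' ^ p, pow_mem_gammaP p hy', map_pow φ y' p⟩

instance gammaP_normal (n : ℕ) : (gammaP p n : Subgroup G).Normal := by
  constructor
  intro x hx g
  have := gammaP_map_le p (MulAut.conj g).toMonoidHom n ⟨x, hx, rfl⟩
  simpa using this

lemma conj_mem' {N : Subgroup G} (hN : N.Normal) {x : G} (h : x ∈ N) (g : G) :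
    g * x * g⁻¹ ∈ N := hN.conj_mem x h g

lemma gammaP_succ_le : ∀ n, (gammaP p (n+1) : Subgroup G) ≤ gammaP p n
  | 0 => le_top
  | (n+1) => by
    rw [gammaP_def]
    refine (closure_le _).2 ?_
    rintro x (⟨g, y, hy, rfl⟩ | ⟨y, hy, rfl⟩)
    · rw [commutatorElement_def]
      exact mul_mem (conj_mem' (gammaP_normal p (n+1)) hy g) (inv_mem hy)
    · exact pow_mem hy p

lemma quot_comm (N : Subgroup G) [N.Normal] {x y : G} (h : ⁅x, y⁆ ∈ N) :
    Commute (QuotientGroup.mk' N x) (QuotientGroup.mk' N y) := by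
  rw [← commutatorElement_eq_one_iff_commute, ← map_commutatorElement]
  exact (QuotientGroup.eq_one_iff _).2 h

lemma quot_mem {N : Subgroup G} [N.Normal] {x : G} (h : QuotientGroup.mk' N x = 1) :
    x ∈ N := (QuotientGroup.eq_one_iff _).1 h

lemma comm_pow_right (x w : G) (h : Commute w ⁅x, w⁆) : ∀ k : ℕ, ⁅x, w ^ k⁆ = ⁅x, w⁆ ^ k
  | 0 => by simp
  | (k+1) => by
    rw [pow_succ' w k, comm_mul_right, comm_pow_right x w h k, (h.pow_right k).eq,
      mul_inv_cancel_right, ← pow_succ']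

lemma comm_pow_left (w x : G) (h : Commute w ⁅w, x⁆) : ∀ k : ℕ, ⁅w ^ k, x⁆ = ⁅w, x⁆ ^ k
  | 0 => by simp
  | (k+1) => by
    rw [pow_succ' w k, comm_mul_left, comm_pow_left w x h k, (h.pow_right k).eq,
      mul_inv_cancel_right, ← pow_succ]

lemma comm_mul_right_of_commute {x z : G} (w : G) (h : Commute x z) :
    ⁅x, z * w⁆ = z * ⁅x, w⁆ * z⁻¹ := by
  rw [comm_mul_right, commutatorElement_eq_one_iff_commute.2 h, one_mul]
lemma gammaP_comm_mem : ∀ (j i : ℕ) (x y : G), x ∈ (gammaP p (i+1) : Subgroup G) →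
    y ∈ (gammaP p (j+1) : Subgroup G) → ⁅x, y⁆ ∈ (gammaP p (i+j+2) : Subgroup G) := by
  intro j
  induction j with
  | zero =>
    intro i x y hx _
    exact comm_mem_gammaP' p hx y
  | succ j ih =>
    intro i x y hx hy
    rw [gammaP_def] at hy
    refine Subgroup.closure_induction
      (p := fun y _ => ∀ i (x : G), x ∈ (gammaP p (i+1) : Subgroup G) →
        ⁅x, y⁆ ∈ (gammaP p (i+j+3) : Subgroup G)) ?_ ?_ ?_ ?_ hy i x hx
    · rintro y₀ (⟨g, w, hw, rfl⟩ | ⟨w, hw, rfl⟩) i x hx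
      · -- ⁅x, ⁅g, w⁆⁆ with w ∈ γ_{j+1}
        rw [← commutatorElement_inv]
        refine inv_mem ?_
        -- ⁅⁅g,w⁆, x⁆ ∈ γ_{i+j+3}
        have heq : ⁅⁅g,w⁆,x⁆ = g * ((w * ⁅⁅w⁻¹,x⁆,g⁻¹⁆⁻¹ * w⁻¹) *
            (x * ⁅⁅x⁻¹,g⁻¹⁆,w⁆⁻¹ * x⁻¹)) * g⁻¹ := by
          rw [hallWitt]; group
        rw [heq]
        have h1 : ⁅⁅w⁻¹, x⁆, g⁻¹⁆ ∈ (gammaP p (i+j+3) : Subgroup G) := by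
          have hin : ⁅w⁻¹, x⁆ ∈ (gammaP p (i+j+2) : Subgroup G) := by
            rw [← commutatorElement_inv]
            exact inv_mem (ih i x w⁻¹ hx (inv_mem hw))
          exact comm_mem_gammaP' p hin g⁻¹
        have h2 : ⁅⁅x⁻¹, g⁻¹⁆, w⁆ ∈ (gammaP p (i+j+3) : Subgroup G) := by
          have hin : ⁅x⁻¹, g⁻¹⁆ ∈ (gammaP p (i+2) : Subgroup G) :=
            comm_mem_gammaP' p (inv_mem hx) g⁻¹
          have h2' := ih (i+1) _ w hin hw
          rwa [show i+1+j+2 = i+j+3 from by omega] at h2'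
        have hN := gammaP_normal (G := G) p (i+j+3)
        exact conj_mem' hN (mul_mem (conj_mem' hN (inv_mem h1) w) (conj_mem' hN (inv_mem h2) x)) g
      · -- ⁅x, w^p⁆ with w ∈ γ_{j+1}
        set N : Subgroup G := gammaP p (i+j+3) with hNdef
        haveI : N.Normal := gammaP_normal p _
        have hz : ⁅x, w⁆ ∈ (gammaP p (i+j+2) : Subgroup G) := ih i x w hx hw
        set π := QuotientGroup.mk' N with hπ
        have hcomm : Commute (π w) (π ⁅x, w⁆) :=
          quot_comm N (comm_mem_gammaP p w hz)
        apply quot_mem (N := N)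
        have hc' : Commute (π w) ⁅π x, π w⁆ := by
          rw [← map_commutatorElement]; exact hcomm
        rw [map_commutatorElement, map_pow, comm_pow_right _ _ hc',
          ← map_commutatorElement, ← map_pow]
        exact (QuotientGroup.eq_one_iff _).2 (pow_mem_gammaP p hz)
    · intro i x _
      rw [commutatorElement_one_right]
      exact one_mem _
    · intro y₁ y₂ _ _ h₁ h₂ i x hx
      rw [comm_mul_right]
      exact mul_mem (h₁ i x hx) (conj_mem' (gammaP_normal p _) (h₂ i x hx) y₁)
    · intro y₁ _ h i x hx
      rw [comm_inv_right]
      simpa using conj_mem' (gammaP_normal p _) (inv_mem (h i x hx)) y₁⁻¹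

section Specific

variable {B C : Type*} [Group B] [Group C]

/-- `γₖᵖ(ker f)` as a subgroup of `B`. -/
def NN (p : ℕ) (f : B →* C) (k : ℕ) : Subgroup B :=
  (gammaP p k : Subgroup f.ker).map f.ker.subtype

variable (p : ℕ) (f : B →* C) (s : C →* B)

lemma NN_le_ker {k : ℕ} : NN p f k ≤ f.ker := by
  rintro x ⟨y, -, rfl⟩
  exact y.2

lemma mem_NN_of_ker {a : B} (ha : a ∈ f.ker) : a ∈ NN p f 1 :=
  ⟨⟨a, ha⟩, Subgroup.mem_top _, rfl⟩

lemma NN_normal (k : ℕ) : (NN p f k).Normal := by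
  constructor
  rintro x ⟨x₀, hx₀, rfl⟩ b
  have hmem : ∀ a : f.ker, b * (a : B) * b⁻¹ ∈ f.ker := fun a =>
    (MonoidHom.normal_ker f).conj_mem _ a.2 b
  let φ : ↥f.ker →* ↥f.ker :=
    { toFun := fun a => ⟨b * a * b⁻¹, hmem a⟩
      map_one' := by ext; simp
      map_mul' := fun a₁ a₂ => by ext; simp [mul_assoc] }
  exact ⟨φ x₀, gammaP_map_le p φ k ⟨x₀, hx₀, rfl⟩, rfl⟩

lemma NN_pow {k : ℕ} {x : B} (hx : x ∈ NN p f (k+1)) : x ^ p ∈ NN p f (k+2) := by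
  obtain ⟨x₀, h, rfl⟩ := hx
  exact ⟨x₀ ^ p, pow_mem_gammaP p h, map_pow _ _ _⟩

lemma NN_comm_ker {k : ℕ} {a x : B} (ha : a ∈ f.ker) (hx : x ∈ NN p f (k+1)) :
    ⁅a, x⁆ ∈ NN p f (k+2) := by
  obtain ⟨x₀, h, rfl⟩ := hx
  exact ⟨⁅⟨a, ha⟩, x₀⁆, comm_mem_gammaP p _ h, map_commutatorElement _ _ _⟩

lemma NN_comm_ker' {k : ℕ} {a x : B} (ha : a ∈ f.ker) (hx : x ∈ NN p f (k+1)) :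
    ⁅x, a⁆ ∈ NN p f (k+2) := by
  rw [← commutatorElement_inv]
  exact inv_mem (NN_comm_ker p f ha hx)

lemma NN_comm_NN {i j : ℕ} {x y : B} (hx : x ∈ NN p f (i+1)) (hy : y ∈ NN p f (j+1)) :
    ⁅x, y⁆ ∈ NN p f (i+j+2) := by
  obtain ⟨x₀, hx₀, rfl⟩ := hx
  obtain ⟨y₀, hy₀, rfl⟩ := hy
  exact ⟨⁅x₀, y₀⁆, gammaP_comm_mem p j i x₀ y₀ hx₀ hy₀, map_commutatorElement _ _ _⟩

lemma NN_antitone (k : ℕ) : NN p f (k+1) ≤ NN p f k :=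
  Subgroup.map_mono (gammaP_succ_le p k)

variable {f s}

lemma Qbase (hadp : ∀ a ∈ f.ker, ∀ c : C, s c * a * (s c)⁻¹ * a⁻¹ ∈ NN p f 2)
    (c : C) {m : B} (hm : m ∈ NN p f 1) : ⁅s c, m⁆ ∈ NN p f 2 := by
  rw [commutatorElement_def]
  exact hadp m (NN_le_ker p f hm) c

lemma Qlemma (hadp : ∀ a ∈ f.ker, ∀ c : C, s c * a * (s c)⁻¹ * a⁻¹ ∈ NN p f 2) :
    ∀ (k : ℕ) (c : C) {m : B}, m ∈ NN p f (k+1) → ⁅s c, m⁆ ∈ NN p f (k+2) := by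
  intro k
  induction k with
  | zero => exact fun c _ hm => Qbase p hadp c hm
  | succ k ih =>
    intro c m hm
    rw [NN, gammaP_def, MonoidHom.map_closure] at hm
    haveI hN : (NN p f (k+3)).Normal := NN_normal p f _
    refine Subgroup.closure_induction
      (p := fun m _ => ∀ c : C, ⁅s c, m⁆ ∈ NN p f (k+3)) ?_ ?_ ?_ ?_ hm c
    · rintro _ ⟨x₀, hx₀, rfl⟩ c
      rcases hx₀ with ⟨a₀, y₀, hy₀, rfl⟩ | ⟨y₀, hy₀, rfl⟩
      · -- commutator generator
        have hy : (y₀ : B) ∈ NN p f (k+1) := ⟨y₀, hy₀, rfl⟩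
        have ha : (a₀ : B) ∈ f.ker := a₀.2
        rw [show f.ker.subtype ⁅a₀, y₀⁆ = ⁅(a₀ : B), (y₀ : B)⁆ from
          map_commutatorElement _ _ _]
        set a : B := (a₀ : B)
        set y : B := (y₀ : B)
        have hu2 : ⁅s c, a⁆ ∈ NN p f 2 := Qbase p hadp c (mem_NN_of_ker p f ha)
        have hu_ker : ⁅s c, a⁆ ∈ f.ker := NN_le_ker p f hu2
        have hv : ⁅s c, y⁆ ∈ NN p f (k+2) := ih c hy
        have hv_ker : ⁅s c, y⁆ ∈ f.ker := NN_le_ker p f hv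
        have hy_ker : y ∈ f.ker := NN_le_ker p f hy
        have ht : ⁅a, y⁆ ∈ NN p f (k+2) := NN_comm_ker p f ha hy
        set N : Subgroup B := NN p f (k+3)
        set π := QuotientGroup.mk' N with hπ
        apply quot_mem (N := N)
        have c1 : Commute (π ⁅s c, y⁆) (π a) := quot_comm N (NN_comm_ker' p f ha hv)
        have c2 : Commute (π ⁅s c, y⁆) (π ⁅s c, a⁆) := quot_comm N (NN_comm_ker' p f hu_ker hv)
        have c4 : Commute (π ⁅s c, a⁆) (π y) := by
          refine quot_comm N ?_
          have h4 := NN_comm_NN p f (i := 1) (j := k) hu2 hy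
          rwa [show 1+k+2 = k+3 from by omega] at h4
        have c5 : Commute (π ⁅s c, a⁆) ⁅π a, π y⁆ := by
          rw [← map_commutatorElement]
          exact quot_comm N (NN_comm_ker p f hu_ker ht)
        have c6 : Commute (π ⁅s c, y⁆) ⁅π a, π y⁆ := by
          rw [← map_commutatorElement]
          exact quot_comm N (NN_comm_ker p f hv_ker ht)
        have e1 : ⁅π ⁅s c, a⁆ * π a, π y⁆ = ⁅π a, π y⁆ := by
          rw [comm_mul_left, commutatorElement_eq_one_iff_commute.2 c4, mul_one,
            c5.eq, mul_inv_cancel_right]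
        have e2 : ⁅π ⁅s c, a⁆ * π a, π ⁅s c, y⁆ * π y⁆ = ⁅π a, π y⁆ := by
          rw [comm_mul_right_of_commute _ (Commute.mul_left c2.symm c1.symm), e1,
            c6.eq, mul_inv_cancel_right]
        rw [comm_eq_commutator, map_mul, map_commutatorElement, map_mul, map_mul, map_inv,
          e2, map_commutatorElement, mul_inv_cancel]
      · -- p-th power generator
        have hy : (y₀ : B) ∈ NN p f (k+1) := ⟨y₀, hy₀, rfl⟩
        have hy_ker : (y₀ : B) ∈ f.ker := NN_le_ker p f hy
        rw [show f.ker.subtype (y₀ ^ p) = (y₀ : B) ^ p from map_pow _ _ _]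
        set y : B := (y₀ : B)
        have hv : ⁅s c, y⁆ ∈ NN p f (k+2) := ih c hy
        set N : Subgroup B := NN p f (k+3)
        set π := QuotientGroup.mk' N with hπ
        apply quot_mem (N := N)
        have hc' : Commute (π y) ⁅π (s c), π y⁆ := by
          rw [← map_commutatorElement]
          exact quot_comm N (NN_comm_ker p f hy_ker hv)
        rw [map_commutatorElement, map_pow, comm_pow_right _ _ hc',
          ← map_commutatorElement, ← map_pow]
        exact (QuotientGroup.eq_one_iff _).2 (NN_pow p f hv)
    · intro c
      rw [commutatorElement_one_right]
      exact one_mem _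
    · intro m₁ m₂ _ _ h₁ h₂ c
      rw [comm_mul_right]
      exact mul_mem (h₁ c) (conj_mem' hN (h₂ c) m₁)
    · intro m₁ _ h c
      rw [comm_inv_right]
      simpa using conj_mem' hN (inv_mem (h c)) m₁⁻¹

end Specific

section Specific2

open Pointwise

variable {B C : Type*} [Group B] [Group C] (p : ℕ) {f : B →* C} {s : C →* B}

lemma QQlemma (hadp : ∀ a ∈ f.ker, ∀ c : C, s c * a * (s c)⁻¹ * a⁻¹ ∈ NN p f 2) :
    ∀ (j : ℕ) (x : C), x ∈ (gammaP p (j+1) : Subgroup C) →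
      ∀ (k : ℕ) {m : B}, m ∈ NN p f (k+1) → ⁅s x, m⁆ ∈ NN p f (j+k+2) := by
  intro j
  induction j with
  | zero =>
    intro x _ k m hm
    have := Qlemma p hadp k x hm
    rwa [show k+2 = 0+k+2 from by omega] at this
  | succ j ih =>
    intro x hx k m hm
    rw [gammaP_def] at hx
    have hmain : ∀ (k : ℕ) {m : B}, m ∈ NN p f (k+1) → ⁅s x, m⁆ ∈ NN p f (j+k+3) := by
      refine Subgroup.closure_induction
        (p := fun x _ => ∀ (k : ℕ) {m : B}, m ∈ NN p f (k+1) → ⁅s x, m⁆ ∈ NN p f (j+k+3))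
        ?_ ?_ ?_ ?_ hx
      · rintro _ (⟨d, e, he, rfl⟩ | ⟨e, he, rfl⟩) k m hm
        · -- commutator generator
          haveI hN : (NN p f (j+k+3)).Normal := NN_normal p f _
          rw [map_commutatorElement]
          have h1 : ⁅⁅(s e)⁻¹, m⁆, (s d)⁻¹⁆ ∈ NN p f (j+k+3) := by
            rw [← map_inv s e, ← map_inv s d]
            have hin : ⁅s e⁻¹, m⁆ ∈ NN p f (j+k+2) := ih e⁻¹ (inv_mem he) k hm
            rw [← commutatorElement_inv]
            exact inv_mem (Qlemma p hadp (j+k+1) d⁻¹ hin)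
          have h2 : ⁅⁅m⁻¹, (s d)⁻¹⁆, s e⁆ ∈ NN p f (j+k+3) := by
            have hin : ⁅m⁻¹, (s d)⁻¹⁆ ∈ NN p f (k+2) := by
              rw [← map_inv s d, ← commutatorElement_inv]
              exact inv_mem (Qlemma p hadp k d⁻¹ (inv_mem hm))
            rw [← commutatorElement_inv]
            exact inv_mem (ih e he (k+1) hin)
          have heq : ⁅⁅s d, s e⁆, m⁆ = s d * ((s e * ⁅⁅(s e)⁻¹, m⁆, (s d)⁻¹⁆⁻¹ * (s e)⁻¹) *
              (m * ⁅⁅m⁻¹, (s d)⁻¹⁆, s e⁆⁻¹ * m⁻¹)) * (s d)⁻¹ := by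
            rw [hallWitt]; group
          rw [heq]
          exact conj_mem' hN (mul_mem (conj_mem' hN (inv_mem h1) (s e))
            (conj_mem' hN (inv_mem h2) m)) (s d)
        · -- power generator
          have hz : ⁅s e, m⁆ ∈ NN p f (j+k+2) := ih e he k hm
          set N : Subgroup B := NN p f (j+k+3)
          haveI hN : N.Normal := NN_normal p f _
          set π := QuotientGroup.mk' N with hπ
          apply quot_mem (N := N)
          have hc' : Commute (π (s e)) ⁅π (s e), π m⁆ := by
            rw [← map_commutatorElement]
            exact quot_comm N (Qlemma p hadp (j+k+1) e hz)
          rw [map_pow, map_commutatorElement, map_pow, comm_pow_left _ _ hc',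
            ← map_commutatorElement, ← map_pow]
          exact (QuotientGroup.eq_one_iff _).2 (NN_pow p f hz)
      · intro k m hm
        rw [map_one, commutatorElement_one_left]
        exact one_mem _
      · intro x₁ x₂ _ _ h₁ h₂ k m hm
        haveI hN : (NN p f (j+k+3)).Normal := NN_normal p f _
        rw [map_mul, comm_mul_left]
        exact mul_mem (conj_mem' hN (h₂ k hm) (s x₁)) (h₁ k hm)
      · intro x₁ _ h k m hm
        haveI hN : (NN p f (j+k+3)).Normal := NN_normal p f _
        rw [map_inv, comm_inv_left]
        simpa using conj_mem' hN (inv_mem (h k hm)) (s x₁)⁻¹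
    have := hmain k hm
    rwa [show j+k+3 = j+1+k+2 from by omega] at this

lemma central (hs : ∀ c, f (s c) = c)
    (hadp : ∀ a ∈ f.ker, ∀ c : C, s c * a * (s c)⁻¹ * a⁻¹ ∈ NN p f 2)
    (k : ℕ) (b : B) {m : B} (hm : m ∈ NN p f (k+1)) : ⁅b, m⁆ ∈ NN p f (k+2) := by
  haveI hN : (NN p f (k+2)).Normal := NN_normal p f _
  have ha : b * (s (f b))⁻¹ ∈ f.ker := by
    rw [MonoidHom.mem_ker, map_mul, map_inv, hs, mul_inv_cancel]
  have hb : b = (b * (s (f b))⁻¹) * s (f b) := by group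
  nth_rewrite 1 [hb]
  rw [comm_mul_left]
  exact mul_mem (conj_mem' hN (Qlemma p hadp k (f b) hm) _) (NN_comm_ker p f ha hm)

lemma gammaB_le (hs : ∀ c, f (s c) = c)
    (hadp : ∀ a ∈ f.ker, ∀ c : C, s c * a * (s c)⁻¹ * a⁻¹ ∈ NN p f 2) :
    ∀ n : ℕ, (gammaP p (n+1) : Subgroup B) ≤
      NN p f (n+1) ⊔ (gammaP p (n+1) : Subgroup C).map s := by
  intro n
  induction n with
  | zero =>
    intro b _
    have ha : b * (s (f b))⁻¹ ∈ NN p f 1 := mem_NN_of_ker p f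
      (by rw [MonoidHom.mem_ker, map_mul, map_inv, hs, mul_inv_cancel])
    have hsb : s (f b) ∈ (gammaP p 1 : Subgroup C).map s := ⟨f b, Subgroup.mem_top _, rfl⟩
    have hb : b = (b * (s (f b))⁻¹) * s (f b) := by group
    rw [hb]
    exact mul_mem (Subgroup.mem_sup_left ha) (Subgroup.mem_sup_right hsb)
  | succ n ihP =>
    rw [gammaP_def]
    refine (Subgroup.closure_le _).2 ?_
    haveI hN1 : (NN p f (n+1)).Normal := NN_normal p f _
    haveI hN : (NN p f (n+2)).Normal := NN_normal p f _
    rintro x (⟨g, y, hy, rfl⟩ | ⟨y, hy, rfl⟩)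
    · -- commutator generator
      obtain ⟨m, hm, v, hv, rfl⟩ := Set.mem_mul.1
        (by rw [← Subgroup.normal_mul]; exact ihP hy :
          y ∈ (↑(NN p f (n+1)) * ↑((gammaP p (n+1) : Subgroup C).map s) : Set B))
      obtain ⟨c, hc, rfl⟩ := hv
      set N : Subgroup B := NN p f (n+2) with hNdef
      set π := QuotientGroup.mk' N with hπ
      -- step 1 : ⁅g, m * s c⁆ ≡ ⁅g, s c⁆ mod N
      have step1 : ⁅g, m * s c⁆ * ⁅g, s c⁆⁻¹ ∈ N := by
        apply quot_mem (N := N)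
        have hgm : Commute (π g) (π m) := quot_comm N (central p hs hadp n g hm)
        have hcm : Commute (π m) ⁅π g, π (s c)⁆ := by
          rw [← map_commutatorElement]
          refine quot_comm N ?_
          rw [← commutatorElement_inv]
          exact inv_mem (central p hs hadp n ⁅g, s c⁆ hm)
        rw [map_mul, map_inv, map_commutatorElement, map_commutatorElement, map_mul,
          comm_mul_right_of_commute _ hgm, hcm.eq, mul_inv_cancel_right, mul_inv_cancel]
      -- step 2 : ⁅g, s c⁆ ∈ M
      have step2 : ⁅g, s c⁆ ∈ NN p f (n+2) ⊔ (gammaP p (n+2) : Subgroup C).map s := by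
        have ha : g * (s (f g))⁻¹ ∈ f.ker := by
          rw [MonoidHom.mem_ker, map_mul, map_inv, hs, mul_inv_cancel]
        have hg : g = (g * (s (f g))⁻¹) * s (f g) := by group
        have e3 : ⁅g * (s (f g))⁻¹, s c⁆ ∈ NN p f (n+2) := by
          rw [← commutatorElement_inv]
          exact inv_mem (QQlemma p hadp n c hc 0 (mem_NN_of_ker p f ha))
        have hw : ⁅s (f g), s c⁆ ∈ (gammaP p (n+2) : Subgroup C).map s :=
          ⟨⁅f g, c⁆, comm_mem_gammaP p (f g) hc, map_commutatorElement _ _ _⟩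
        have e4 : ⁅⁅s (f g), s c⁆⁻¹, g * (s (f g))⁻¹⁆ ∈ NN p f (n+2) := by
          refine NN_antitone p f (n+2) ?_
          have h5 := QQlemma p hadp (n+1) ⁅f g, c⁆⁻¹
            (inv_mem (comm_mem_gammaP p (f g) hc)) 0 (mem_NN_of_ker p f ha)
          rwa [map_inv, map_commutatorElement] at h5
        nth_rewrite 1 [hg]
        rw [comm_mul_left, conj_eq_mul_comm]
        exact mul_mem (mul_mem (Subgroup.mem_sup_right hw) (Subgroup.mem_sup_left e4))
          (Subgroup.mem_sup_left e3)
      have hsplit : ⁅g, m * s c⁆ = (⁅g, m * s c⁆ * ⁅g, s c⁆⁻¹) * ⁅g, s c⁆ := by group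
      rw [hsplit]
      exact mul_mem (Subgroup.mem_sup_left step1) step2
    · -- power generator
      obtain ⟨m, hm, v, hv, rfl⟩ := Set.mem_mul.1
        (by rw [← Subgroup.normal_mul]; exact ihP hy :
          y ∈ (↑(NN p f (n+1)) * ↑((gammaP p (n+1) : Subgroup C).map s) : Set B))
      obtain ⟨c, hc, rfl⟩ := hv
      set N : Subgroup B := NN p f (n+2) with hNdef
      set π := QuotientGroup.mk' N with hπ
      have step1 : (m * s c) ^ p * ((s c) ^ p)⁻¹ ∈ N := by
        apply quot_mem (N := N)
        have hcm : Commute (π m) (π (s c)) := by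
          refine quot_comm N ?_
          rw [← commutatorElement_inv]
          exact inv_mem (central p hs hadp n (s c) hm)
        rw [map_mul, map_inv, map_pow, map_pow, map_mul, hcm.mul_pow,
          mul_inv_cancel_right, ← map_pow]
        exact (QuotientGroup.eq_one_iff _).2 (NN_pow p f hm)
      have hsc : (s c) ^ p ∈ (gammaP p (n+2) : Subgroup C).map s :=
        ⟨c ^ p, pow_mem_gammaP p hc, map_pow _ _ _⟩
      have hsplit : (m * s c) ^ p = ((m * s c) ^ p * ((s c) ^ p)⁻¹) * (s c) ^ p := by group
      rw [hsplit]
      exact mul_mem (Subgroup.mem_sup_left step1) (Subgroup.mem_sup_right hsc)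

end Specific2

end GammaPAux

open GammaPAux Pointwise in
/-- If `B` is a `p`-almost direct product of `A = ker f` and `C` (with section `s`), then for
every `n ≥ 1` the restrictions of `f` and `s` yield a split short exact sequence
`1 → γₙᵖ A → γₙᵖ B → γₙᵖ C → 1`; i.e. `f(γₙᵖ B) = γₙᵖ C`, `s(γₙᵖ C) ⊆ γₙᵖ B` and
`A ∩ γₙᵖ B = γₙᵖ A`. -/
theorem statement2 (p : ℕ) (hp : p.Prime)
    {B C : Type*} [Group B] [Group C]
    (f : B →* C) (hf : Function.Surjective f)
    (s : C →* B) (hs : ∀ c, f (s c) = c)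
    (hadp : ∀ a ∈ f.ker, ∀ c : C,
      s c * a * (s c)⁻¹ * a⁻¹ ∈ (gammaP p 2 : Subgroup ↥f.ker).map f.ker.subtype) :
    ∀ n : ℕ, 1 ≤ n →
      (gammaP p n : Subgroup B).map f = (gammaP p n : Subgroup C) ∧
      (gammaP p n : Subgroup C).map s ≤ (gammaP p n : Subgroup B) ∧
      f.ker ⊓ (gammaP p n : Subgroup B) =
        (gammaP p n : Subgroup ↥f.ker).map f.ker.subtype := by
  have hadp' : ∀ a ∈ f.ker, ∀ c : C, s c * a * (s c)⁻¹ * a⁻¹ ∈ NN p f 2 := hadp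
  rintro (_ | m) hn
  · omega
  refine ⟨gammaP_map_eq p f hf (m+1), gammaP_map_le p s (m+1), ?_⟩
  refine le_antisymm ?_ (le_inf (NN_le_ker p f) (gammaP_map_le p f.ker.subtype (m+1)))
  rintro b hb
  obtain ⟨hbk, hbg⟩ := Subgroup.mem_inf.1 hb
  haveI hN1 : (NN p f (m+1)).Normal := NN_normal p f _
  obtain ⟨m', hm', v, hv, rfl⟩ := Set.mem_mul.1
    (by rw [← Subgroup.normal_mul]; exact gammaB_le p hs hadp' m hbg :
      b ∈ (↑(NN p f (m+1)) * ↑((gammaP p (m+1) : Subgroup C).map s) : Set B))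
  obtain ⟨c, hc, rfl⟩ := hv
  have hc1 : c = 1 := by
    have h1 : f (m' * s c) = 1 := hbk
    rwa [map_mul, MonoidHom.mem_ker.1 (NN_le_ker p f hm'), one_mul, hs] at h1
  rw [hc1, map_one, mul_one]
  exact hm'
end

section
/- Let p be a prime and let 1 → A → B →(λ) C → 1 be a split short exact sequence with section σ : C → B such that B is a p-almost direct product of A and C. If A and C are finitely generated and both A and C are residually p-finite, then B is residually p-finite. -/
open scoped commutatorElement

namespace GammaAux

open Pointwise

variable {G : Type*} [Group G] {G' : Type*} [Group G'] {p : ℕ}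

theorem comm_mem_gammaP {n : ℕ} (g : G) {y : G} (hy : y ∈ gammaP p (n+1)) :
    ⁅g, y⁆ ∈ gammaP p (n+2) :=
  Subgroup.subset_closure (Or.inl ⟨g, y, hy, rfl⟩)

theorem pow_mem_gammaP {n : ℕ} {y : G} (hy : y ∈ gammaP p (n+1)) :
    y ^ p ∈ gammaP p (n+2) :=
  Subgroup.subset_closure (Or.inr ⟨y, hy, rfl⟩)

theorem gammaP_map_le (φ : G →* G') : ∀ n, (gammaP p n).map φ ≤ gammaP p n
  | 0 => le_top
  | 1 => le_top
  | n + 2 => by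
    show ((Subgroup.closure _).map φ) ≤ gammaP p (n+2)
    rw [MonoidHom.map_closure]
    apply Subgroup.closure_le _ |>.mpr
    rintro _ ⟨x, hx, rfl⟩
    rcases hx with ⟨g, y, hy, rfl⟩ | ⟨y, hy, rfl⟩
    · rw [map_commutatorElement]
      exact comm_mem_gammaP (φ g) (gammaP_map_le φ (n+1) ⟨y, hy, rfl⟩)
    · rw [map_pow]
      exact pow_mem_gammaP (gammaP_map_le φ (n+1) ⟨y, hy, rfl⟩)

instance gammaP_normal (n : ℕ) : (gammaP p n (G := G)).Normal := by
  constructor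
  intro x hx g
  have := gammaP_map_le (MulAut.conj g).toMonoidHom n (Subgroup.mem_map_of_mem _ hx)
  simpa using this

theorem gammaP_succ_le (n : ℕ) : gammaP p (n+1) (G := G) ≤ gammaP p n := by
  cases n with
  | zero => exact le_top
  | succ n =>
    apply Subgroup.closure_le _ |>.mpr
    rintro x (⟨g, y, hy, rfl⟩ | ⟨y, hy, rfl⟩)
    · have h1 : g * y * g⁻¹ ∈ gammaP p (n+1) := (gammaP_normal (n+1)).conj_mem y hy g
      simpa [commutatorElement_def, mul_assoc] using
        Subgroup.mul_mem _ h1 (Subgroup.inv_mem _ hy)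
    · exact Subgroup.pow_mem _ hy p

theorem gammaP_le_of_le {m n : ℕ} (h : m ≤ n) : gammaP p n (G := G) ≤ gammaP p m := by
  induction h with
  | refl => exact le_rfl
  | step _ ih => exact le_trans (gammaP_succ_le _) ih

theorem comm_closure_le {N : Subgroup G} [hN : N.Normal] {S T : Set G}
    (h : ∀ x ∈ S, ∀ y ∈ T, ⁅x, y⁆ ∈ N) :
    ⁅Subgroup.closure S, Subgroup.closure T⁆ ≤ N := by
  rw [Subgroup.commutator_le]
  intro a ha b hb
  revert b hb
  refine Subgroup.closure_induction
    (p := fun a _ => ∀ b, b ∈ Subgroup.closure T → ⁅a, b⁆ ∈ N) ?_ ?_ ?_ ?_ ha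
  · intro x hx
    intro b hb
    refine Subgroup.closure_induction (p := fun b _ => ⁅x, b⁆ ∈ N) ?_ ?_ ?_ ?_ hb
    · exact fun y hy => h x hx y hy
    · simpa using N.one_mem
    · intro y z _ _ hy hz
      have e : ⁅x, y * z⁆ = ⁅x, y⁆ * (y * ⁅x, z⁆ * y⁻¹) := by group
      rw [e]; exact N.mul_mem hy (hN.conj_mem _ hz y)
    · intro y _ hy
      have e : ⁅x, y⁻¹⁆ = y⁻¹ * ⁅x, y⁆⁻¹ * y := by group
      rw [e]
      simpa using hN.conj_mem _ (N.inv_mem hy) y⁻¹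
  · intro b hb; simpa using N.one_mem
  · intro x y _ _ hx hy b hb
    have e : ⁅x * y, b⁆ = x * ⁅y, b⁆ * x⁻¹ * ⁅x, b⁆ := by group
    rw [e]; exact N.mul_mem (hN.conj_mem _ (hy b hb) x) (hx b hb)
  · intro x _ hx b hb
    have e : ⁅x⁻¹, b⁆ = x⁻¹ * ⁅x, b⁆⁻¹ * x := by group
    rw [e]
    simpa using hN.conj_mem _ (N.inv_mem (hx b hb)) x⁻¹

theorem comm_le_of_le {N H K : Subgroup G} [N.Normal] {S T : Set G}
    (hH : H ≤ Subgroup.closure S) (hK : K ≤ Subgroup.closure T)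
    (h : ∀ x ∈ S, ∀ y ∈ T, ⁅x, y⁆ ∈ N) : ⁅H, K⁆ ≤ N :=
  le_trans (Subgroup.commutator_mono hH hK) (comm_closure_le h)

theorem triple_comm_le {N X Y Z : Subgroup G} [hN : N.Normal]
    (h1 : ⁅⁅Y, Z⁆, X⁆ ≤ N) (h2 : ⁅⁅Z, X⁆, Y⁆ ≤ N) : ⁅⁅X, Y⁆, Z⁆ ≤ N := by
  let π := QuotientGroup.mk' N
  have key : ∀ U V W : Subgroup G,
      ⁅⁅U, V⁆, W⁆ ≤ N ↔ ⁅⁅U.map π, V.map π⁆, W.map π⁆ = ⊥ := by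
    intro U V W
    rw [← Subgroup.map_commutator, ← Subgroup.map_commutator, Subgroup.map_eq_bot_iff,
      QuotientGroup.ker_mk']
  rw [key] at h1 h2 ⊢
  exact Subgroup.commutator_commutator_eq_bot_of_rotate h1 h2

theorem comm_pow_mem {N : Subgroup G} [hN : N.Normal] {g x : G} (k : ℕ)
    (hc : ⁅⁅g, x⁆, x⁆ ∈ N) (hp : ⁅g, x⁆ ^ k ∈ N) : ⁅g, x ^ k⁆ ∈ N := by
  rw [← QuotientGroup.eq_one_iff (G := G) (N := N)] at hc hp ⊢
  let π := QuotientGroup.mk' N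
  replace hc : π ⁅⁅g, x⁆, x⁆ = 1 := hc
  replace hp : π (⁅g, x⁆ ^ k) = 1 := hp
  show π ⁅g, x ^ k⁆ = 1
  have hcomm : Commute (⁅(π g), (π x)⁆) (π x) := by
    have : π ⁅⁅g, x⁆, x⁆ = ⁅⁅π g, π x⁆, π x⁆ := by
      simp [map_commutatorElement]
    rw [commutatorElement_eq_one_iff_commute.symm, ← this]
    exact hc
  have main : ∀ m : ℕ, ⁅π g, (π x) ^ m⁆ = ⁅π g, π x⁆ ^ m := by
    intro m
    induction m with
    | zero => simp
    | succ m ih =>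
      have e : ⁅π g, (π x) * (π x) ^ m⁆ =
          ⁅π g, π x⁆ * ((π x) * ⁅π g, (π x) ^ m⁆ * (π x)⁻¹) := by group
      rw [pow_succ']
      rw [e, ih]
      have : (π x) * ⁅π g, π x⁆ ^ m * (π x)⁻¹ = ⁅π g, π x⁆ ^ m := by
        rw [(hcomm.pow_left m).symm.eq]; group
      rw [this, pow_succ']
  have : π ⁅g, x ^ k⁆ = ⁅π g, (π x) ^ k⁆ := by simp [map_commutatorElement]
  rw [this, main k, ← map_commutatorElement, ← map_pow]
  exact hp

theorem comm_pow_mem' {N : Subgroup G} [hN : N.Normal] {g x : G} (k : ℕ)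
    (hc : ⁅⁅x, g⁆, x⁆ ∈ N) (hp : ⁅x, g⁆ ^ k ∈ N) : ⁅x ^ k, g⁆ ∈ N := by
  have h1 : ⁅⁅g, x⁆, x⁆ ∈ N := by
    have e : ⁅⁅g, x⁆, x⁆ = ⁅g,x⁆ * ⁅⁅x, g⁆, x⁆⁻¹ * ⁅g,x⁆⁻¹ := by group
    rw [e]
    exact hN.conj_mem _ (N.inv_mem hc) _
  have h2 : ⁅g, x⁆ ^ k ∈ N := by
    have e : ⁅g, x⁆ ^ k = (⁅x, g⁆⁻¹) ^ k := by group
    rw [e, inv_pow]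
    exact N.inv_mem hp
  have := comm_pow_mem k h1 h2
  have e : ⁅x ^ k, g⁆ = ⁅g, x ^ k⁆⁻¹ := by group
  rw [e]
  exact N.inv_mem this

theorem mul_pow_mem_mul {N : Subgroup G} [hN : N.Normal] {u v : G}
    (h : ⁅u, v⁆ ∈ N) (k : ℕ) : ∃ w ∈ N, (u * v) ^ k = w * (u ^ k * v ^ k) := by
  refine ⟨(u*v)^k * (u^k * v^k)⁻¹, ?_, by group⟩
  rw [← QuotientGroup.eq_one_iff (G := G) (N := N)] at h ⊢
  let π := QuotientGroup.mk' N
  replace h : π ⁅u, v⁆ = 1 := h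
  show π ((u*v)^k * (u^k * v^k)⁻¹) = 1
  have hcomm : Commute (π u) (π v) := by
    rw [← commutatorElement_eq_one_iff_commute]
    rw [← map_commutatorElement]
    exact h
  have : π ((u*v)^k) = π (u^k * v^k) := by
    rw [map_pow, map_mul, hcomm.mul_pow, map_mul, map_pow, map_pow]
  rw [map_mul, map_inv, this]
  group


theorem gammaP_def2 (n : ℕ) : gammaP p (n+2) (G := G) = Subgroup.closure
      ({x : G | ∃ g y : G, y ∈ gammaP p (n + 1) ∧ x = ⁅g, y⁆} ∪
       {x : G | ∃ y : G, y ∈ gammaP p (n + 1) ∧ x = y ^ p}) := rfl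

theorem gammaP_comm_top (m : ℕ) :
    ⁅gammaP p (m+1) (G := G), (⊤ : Subgroup G)⁆ ≤ gammaP p (m+2) := by
  rw [Subgroup.commutator_le]
  intro h hh g _
  have e : ⁅h, g⁆ = ⁅g, h⁆⁻¹ := by group
  rw [e]
  exact Subgroup.inv_mem _ (comm_mem_gammaP g hh)

theorem gammaP_top_comm (m : ℕ) :
    ⁅(⊤ : Subgroup G), gammaP p (m+1) (G := G)⁆ ≤ gammaP p (m+2) := by
  rw [Subgroup.commutator_comm]
  exact gammaP_comm_top m

theorem gammaP_comm_gammaP (j i : ℕ) :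
    ⁅gammaP p (i+1) (G := G), gammaP p (j+1) (G := G)⁆ ≤ gammaP p (i+j+2) (G := G) := by
  induction j generalizing i with
  | zero => simpa [show gammaP p 1 (G := G) = ⊤ from rfl] using gammaP_comm_top (p := p) (G := G) i
  | succ j IH =>
    set N := gammaP p (i+(j+1)+2) (G := G) with hNdef
    have hN : N.Normal := gammaP_normal _
    refine comm_le_of_le (le_of_eq (Subgroup.closure_eq _).symm)
      (le_of_eq (gammaP_def2 j)) ?_
    intro x hx y hy
    rcases hy with ⟨g, y', hy', rfl⟩ | ⟨y', hy', rfl⟩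
    · have e : ⁅x, ⁅g, y'⁆⁆ = ⁅⁅g, y'⁆, x⁆⁻¹ := by group
      rw [e]
      refine Subgroup.inv_mem _ ?_
      have hZg : Subgroup.closure {g} ≤ (⊤ : Subgroup G) := le_top
      have hZy : Subgroup.closure {y'} ≤ gammaP p (j+1) :=
        (Subgroup.closure_le _).mpr (by simpa using hy')
      have h1 : ⁅⁅Subgroup.closure {y'}, gammaP p (i+1) (G := G)⁆, Subgroup.closure {g}⁆ ≤ N := by
        have s2 : ⁅Subgroup.closure {y'}, gammaP p (i+1) (G := G)⁆ ≤ gammaP p (i+j+2) (G := G) := by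
          refine le_trans (Subgroup.commutator_mono hZy le_rfl) ?_
          rw [Subgroup.commutator_comm]
          exact IH i
        refine le_trans (Subgroup.commutator_mono s2 le_top) ?_
        have := gammaP_comm_top (p := p) (G := G) (i+j+1)
        simpa [hNdef, show i+(j+1)+2 = (i+j+1)+2 by omega] using this
      have h2 : ⁅⁅gammaP p (i+1) (G := G), Subgroup.closure {g}⁆, Subgroup.closure {y'}⁆ ≤ N := by
        have s2 : ⁅gammaP p (i+1) (G := G), Subgroup.closure {g}⁆ ≤ gammaP p (i+2) :=
          le_trans (Subgroup.commutator_mono le_rfl le_top) (gammaP_comm_top i)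
        refine le_trans (Subgroup.commutator_mono s2 hZy) ?_
        have := IH (i+1)
        simpa [hNdef, show (i+1)+j+2 = i+(j+1)+2 by omega] using this
      have Hsub := triple_comm_le (N := N) h1 h2
      exact Hsub (Subgroup.commutator_mem_commutator
        (Subgroup.commutator_mem_commutator (Subgroup.subset_closure rfl)
          (Subgroup.subset_closure rfl)) hx)
    · refine comm_pow_mem (N := N) p ?_ ?_
      · have hm : ⁅x, y'⁆ ∈ gammaP p (i+j+2) := IH i (Subgroup.commutator_mem_commutator hx hy')
        have := gammaP_comm_top (p := p) (G := G) (i+j+1)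
        have h' : ⁅⁅x, y'⁆, y'⁆ ∈ gammaP p ((i+j+1)+2) :=
          this (Subgroup.commutator_mem_commutator hm (Subgroup.mem_top y'))
        simpa [hNdef, show i+(j+1)+2 = (i+j+1)+2 by omega] using h'
      · have hm : ⁅x, y'⁆ ∈ gammaP p (i+j+2) := IH i (Subgroup.commutator_mem_commutator hx hy')
        have h' : ⁅x, y'⁆ ^ p ∈ gammaP p ((i+j+1)+2) := pow_mem_gammaP hm
        simpa [hNdef, show i+(j+1)+2 = (i+j+1)+2 by omega] using h'


theorem gammaP_pow_prime_pow (n : ℕ) (g : G) : g ^ (p ^ n) ∈ gammaP p (n+1) := by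
  induction n with
  | zero => simp [gammaP]
  | succ n ih =>
    rw [pow_succ, pow_mul]
    exact pow_mem_gammaP ih

theorem gammaP_eq_bot_of_fixpoint [Finite G] (hp : p.Prime) (hG : IsPGroup p G)
    {n : ℕ} (heq : gammaP p (n+2) (G := G) = gammaP p (n+1)) :
    gammaP p (n+1) (G := G) = ⊥ := by
  haveI : Fact p.Prime := ⟨hp⟩
  set N := gammaP p (n+1) (G := G) with hNdef
  have hNnormal : N.Normal := gammaP_normal _
  set D := ⁅(⊤ : Subgroup G), N⁆ with hD
  have hDnormal : D.Normal := Subgroup.commutator_normal ⊤ N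
  set Ppow := Subgroup.closure {x : G | ∃ y ∈ N, x = y ^ p} with hPpow
  have hNle : N ≤ D ⊔ Ppow := by
    have h2 : gammaP p (n+2) (G := G) ≤ D ⊔ Ppow := by
      rw [gammaP_def2]
      apply Subgroup.closure_le _ |>.mpr
      rintro x (⟨g, y, hy, rfl⟩ | ⟨y, hy, rfl⟩)
      · exact Subgroup.mem_sup_left (Subgroup.commutator_mem_commutator (Subgroup.mem_top g) hy)
      · exact Subgroup.mem_sup_right (Subgroup.subset_closure ⟨y, hy, rfl⟩)
    intro x hx
    refine h2 ?_
    rw [heq]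
    exact hx
  let π := QuotientGroup.mk' D
  set T := N.map π with hT
  have hTcomm : ∀ t₁ ∈ T, ∀ t₂ ∈ T, Commute t₁ t₂ := by
    intro t₁ h₁ t₂ h₂
    have hb : ⁅T, T⁆ = ⊥ := by
      rw [hT, ← Subgroup.map_commutator, Subgroup.map_eq_bot_iff, QuotientGroup.ker_mk']
      exact Subgroup.commutator_mono le_top le_rfl
    have hm := Subgroup.commutator_mem_commutator h₁ h₂
    rw [hb, Subgroup.mem_bot] at hm
    exact commutatorElement_eq_one_iff_commute.mp hm
  have hTpow : ∀ t ∈ T, ∃ t₀ ∈ T, t₀ ^ p = t := by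
    let Sp : Subgroup (G ⧸ D) :=
      { carrier := {x | ∃ t₀ ∈ T, t₀ ^ p = x}
        one_mem' := ⟨1, T.one_mem, one_pow p⟩
        mul_mem' := by
          rintro _ _ ⟨t₀, ht₀, rfl⟩ ⟨s₀, hs₀, rfl⟩
          exact ⟨t₀ * s₀, T.mul_mem ht₀ hs₀, ((hTcomm _ ht₀ _ hs₀).mul_pow p)⟩
        inv_mem' := by
          rintro _ ⟨t₀, ht₀, rfl⟩
          exact ⟨t₀⁻¹, T.inv_mem ht₀, (inv_pow _ _)⟩ }
    have hle : T ≤ Sp := by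
      rw [hT]
      refine le_trans (Subgroup.map_mono hNle) ?_
      rw [Subgroup.map_sup]
      have h1 : D.map π = ⊥ := by
        rw [Subgroup.map_eq_bot_iff, QuotientGroup.ker_mk']
      rw [h1, bot_sup_eq, hPpow, MonoidHom.map_closure]
      apply Subgroup.closure_le _ |>.mpr
      rintro _ ⟨_, ⟨y, hy, rfl⟩, rfl⟩
      exact ⟨π y, Subgroup.mem_map_of_mem _ hy, (map_pow π y p).symm⟩
    exact fun t ht => hle ht
  let F : ↥T → ↥T := fun t => ⟨(t : G ⧸ D) ^ p, T.pow_mem t.2 p⟩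
  have hFsurj : Function.Surjective F := by
    rintro ⟨t, ht⟩
    obtain ⟨t₀, ht₀, h⟩ := hTpow t ht
    exact ⟨⟨t₀, ht₀⟩, Subtype.ext h⟩
  have hFinj : Function.Injective F := Finite.injective_iff_surjective.mpr hFsurj
  have key : ∀ k : ℕ, ∀ t ∈ T, t ^ (p ^ k) = 1 → t = 1 := by
    intro k
    induction k with
    | zero => intro t _ h; simpa using h
    | succ k ih =>
      intro t ht h
      have hu : t ^ (p ^ k) ∈ T := T.pow_mem ht _
      have hF : F ⟨t ^ (p ^ k), hu⟩ = F ⟨1, T.one_mem⟩ := by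
        apply Subtype.ext
        show (t ^ (p ^ k)) ^ p = (1 : G ⧸ D) ^ p
        rw [one_pow, ← pow_mul, ← pow_succ]
        exact h
      exact ih t ht (Subtype.ext_iff.mp (hFinj hF))
  have hTbot : T = ⊥ := by
    rw [Subgroup.eq_bot_iff_forall]
    intro t ht
    obtain ⟨k, hk⟩ := (hG.to_quotient D) t
    exact key k t ht hk
  have hND : N ≤ D := by
    intro x hx
    have hm : π x ∈ T := Subgroup.mem_map_of_mem _ hx
    rw [hTbot, Subgroup.mem_bot] at hm
    exact (QuotientGroup.eq_one_iff x).mp hm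
  have hLCS : ∀ k, N ≤ Subgroup.lowerCentralSeries ⊤ k := by
    intro k
    induction k with
    | zero => exact le_top
    | succ k ih =>
      refine le_trans hND ?_
      rw [hD, Subgroup.lowerCentralSeries_succ, Subgroup.commutator_comm]
      exact Subgroup.commutator_mono ih le_rfl
  haveI : Group.IsNilpotent G := hG.isNilpotent
  obtain ⟨k, hk⟩ := Subgroup.nilpotent_iff_lowerCentralSeries.mp ‹Group.IsNilpotent G›
  exact le_bot_iff.mp (hk ▸ hLCS k)

theorem gammaP_eventually_bot [Finite G] (hp : p.Prime) (hG : IsPGroup p G) :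
    ∃ n : ℕ, gammaP p (n+1) (G := G) = ⊥ := by
  have step : ∀ m n : ℕ, Nat.card (gammaP p (n+1) (G := G)) ≤ m + 1 →
      gammaP p (n+1+m) (G := G) = ⊥ := by
    intro m
    induction m with
    | zero =>
      intro n h
      exact Subgroup.eq_bot_of_card_le _ h
    | succ m ih =>
      intro n h
      by_cases hcase : gammaP p (n+2) (G := G) = gammaP p (n+1)
      · have hbot := gammaP_eq_bot_of_fixpoint hp hG hcase
        have hle : gammaP p (n+1+(m+1)) (G := G) ≤ gammaP p (n+1) :=
          gammaP_le_of_le (by omega)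
        rw [hbot] at hle
        exact le_bot_iff.mp hle
      · have hlt : gammaP p (n+2) (G := G) < gammaP p (n+1) :=
          lt_of_le_of_ne (gammaP_succ_le _) hcase
        have hcard : Nat.card (gammaP p (n+2) (G := G)) < Nat.card (gammaP p (n+1) (G := G)) := by
          have hss := Set.ncard_lt_ncard (SetLike.coe_ssubset_coe.mpr hlt) (Set.toFinite _)
          have e1 : Nat.card (gammaP p (n+2) (G := G)) =
              ((gammaP p (n+2) (G := G) : Set G)).ncard := Nat.card_coe_set_eq _
          have e2 : Nat.card (gammaP p (n+1) (G := G)) =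
              ((gammaP p (n+1) (G := G) : Set G)).ncard := Nat.card_coe_set_eq _
          rw [e1, e2]
          exact hss
        have h2 : Nat.card (gammaP p (n+2) (G := G)) ≤ m + 1 := by omega
        have := ih (n+1) h2
        have e : n+1+1+m = n+1+(m+1) := by omega
        rw [e] at this
        exact this
  set M := Nat.card (gammaP p 1 (G := G)) with hM
  have h := step M 0 (Nat.le_succ _)
  refine ⟨M, ?_⟩
  have e : (0:ℕ)+1+M = M+1 := by omega
  rw [e] at h
  exact h

theorem gammaP_index_ne_zero [Group.FG G] (hp : p.Prime) (n : ℕ) :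
    (gammaP p n (G := G)).index ≠ 0 := by
  induction n with
  | zero => show (⊤ : Subgroup G).index ≠ 0; simp [Subgroup.index_top]
  | succ n ih =>
    cases n with
    | zero => show (⊤ : Subgroup G).index ≠ 0; simp [Subgroup.index_top]
    | succ n =>
      set K := gammaP p (n+1) (G := G) with hK
      haveI : K.FiniteIndex := ⟨ih⟩
      haveI hKfg : Group.FG ↥K := Subgroup.fg_of_index_ne_zero K
      set Nq := (gammaP p (n+2) (G := G)).subgroupOf K with hNq
      haveI : Nq.Normal := Subgroup.normal_subgroupOf
      have hcomm : ∀ x y : ↥K ⧸ Nq, x * y = y * x := by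
        intro x y
        refine QuotientGroup.induction_on x fun a => ?_
        refine QuotientGroup.induction_on y fun b => ?_
        show QuotientGroup.mk (a * b) = QuotientGroup.mk (b * a)
        rw [QuotientGroup.eq]
        have e : (a*b)⁻¹ * (b*a) = ⁅b⁻¹, a⁻¹⁆ := by group
        rw [e, Subgroup.mem_subgroupOf]
        have e2 : ((⁅b⁻¹, a⁻¹⁆ : ↥K) : G) = ⁅(b : G)⁻¹, (a : G)⁻¹⁆ := by
          simp [commutatorElement_def]
        rw [e2]
        exact comm_mem_gammaP _ (K.inv_mem a.2)
      have htor : ∀ x : ↥K ⧸ Nq, x ^ p = 1 := by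
        intro x
        refine QuotientGroup.induction_on x fun a => ?_
        show (QuotientGroup.mk' Nq a) ^ p = 1
        rw [← map_pow]
        refine (QuotientGroup.eq_one_iff _).mpr ?_
        rw [Subgroup.mem_subgroupOf]
        have e : ((a ^ p : ↥K) : G) = (a : G) ^ p := by push_cast; rfl
        rw [e]
        exact pow_mem_gammaP a.2
      haveI hQfg : Group.FG (↥K ⧸ Nq) :=
        Group.fg_of_surjective (QuotientGroup.mk'_surjective Nq)
      letI : CommGroup (↥K ⧸ Nq) := { (inferInstance : Group (↥K ⧸ Nq)) with mul_comm := hcomm }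
      have htor' : Monoid.IsTorsion (↥K ⧸ Nq) := fun x =>
        isOfFinOrder_iff_pow_eq_one.mpr ⟨p, hp.pos, htor x⟩
      haveI hQfin : Finite (↥K ⧸ Nq) := CommGroup.finite_of_fg_torsion _ htor'
      have hrel : (gammaP p (n+2) (G := G)).relIndex K ≠ 0 :=
        Subgroup.index_ne_zero_of_finite
      have hle : gammaP p (n+2) (G := G) ≤ K := gammaP_succ_le (n+1)
      rw [← Subgroup.relIndex_mul_index hle]
      exact Nat.mul_ne_zero hrel ih

theorem detect [Group.FG G] (hp : p.Prime) {g : G} {n : ℕ}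
    (hg : g ∉ gammaP p (n+1)) :
    ∃ (H : Type) (_ : Group H) (_ : Finite H) (φ : G →* H), IsPGroup p H ∧ φ g ≠ 1 := by
  set N := gammaP p (n+1) (G := G) with hN
  haveI : N.Normal := gammaP_normal _
  haveI hfin : Finite (G ⧸ N) := by
    have h := gammaP_index_ne_zero (G := G) hp (n+1)
    rw [Subgroup.index_eq_card] at h
    exact Nat.finite_of_card_ne_zero h
  have hpg : IsPGroup p (G ⧸ N) := by
    intro q
    refine QuotientGroup.induction_on q fun a => ?_
    refine ⟨n, ?_⟩
    show (QuotientGroup.mk' N a) ^ (p ^ n) = 1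
    rw [← map_pow]
    exact (QuotientGroup.eq_one_iff _).mpr (gammaP_pow_prime_pow n a)
  haveI : Small.{0} (G ⧸ N) := inferInstance
  let e : Shrink.{0} (G ⧸ N) ≃* (G ⧸ N) := Shrink.mulEquiv
  refine ⟨Shrink.{0} (G ⧸ N), inferInstance, Finite.of_equiv _ (equivShrink _),
    e.symm.toMonoidHom.comp (QuotientGroup.mk' N), hpg.of_equiv e.symm, ?_⟩
  intro h
  have h2 : QuotientGroup.mk' N g = 1 := by
    have h3 := congrArg e h
    simpa using h3
  exact hg ((QuotientGroup.eq_one_iff g).mp h2)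


section Almost

variable {B C : Type*} [Group B] [Group C]

/-- image of `gammaP` of the kernel in `B`. -/
def AP (f : B →* C) (p n : ℕ) : Subgroup B :=
  (gammaP p n (G := ↥f.ker)).map f.ker.subtype

/-- image of `gammaP` of `C` under the section `s`. -/
def CP (s : C →* B) (p n : ℕ) : Subgroup B :=
  (gammaP p n (G := C)).map s

variable (f : B →* C) (s : C →* B) (p : ℕ)

theorem AP_one : AP f p 1 = f.ker := by
  show ((⊤ : Subgroup ↥f.ker)).map f.ker.subtype = f.ker
  rw [← MonoidHom.range_eq_map, Subgroup.range_subtype]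

theorem CP_one : CP s p 1 = s.range := by
  show ((⊤ : Subgroup C)).map s = s.range
  rw [← MonoidHom.range_eq_map]

theorem AP_le_of_le {m n : ℕ} (h : m ≤ n) : AP f p n ≤ AP f p m :=
  Subgroup.map_mono (gammaP_le_of_le h)

theorem AP_comm (i j : ℕ) : ⁅AP f p (i+1), AP f p (j+1)⁆ ≤ AP f p (i+j+2) := by
  show ⁅Subgroup.map _ _, Subgroup.map _ _⁆ ≤ Subgroup.map _ _
  rw [← Subgroup.map_commutator]
  exact Subgroup.map_mono (gammaP_comm_gammaP j i)

theorem AP_pow {n : ℕ} {x : B} (hx : x ∈ AP f p (n+1)) : x ^ p ∈ AP f p (n+2) := by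
  obtain ⟨a, ha, rfl⟩ := hx
  exact ⟨a ^ p, pow_mem_gammaP ha, map_pow _ _ _⟩

theorem CP_pow {n : ℕ} {x : B} (hx : x ∈ CP s p (n+1)) : x ^ p ∈ CP s p (n+2) := by
  obtain ⟨c, hc, rfl⟩ := hx
  exact ⟨c ^ p, pow_mem_gammaP hc, map_pow _ _ _⟩

theorem AP_def2 (n : ℕ) : AP f p (n+2) = Subgroup.closure (f.ker.subtype ''
    ({x : ↥f.ker | ∃ g y : ↥f.ker, y ∈ gammaP p (n + 1) ∧ x = ⁅g, y⁆} ∪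
     {x : ↥f.ker | ∃ y : ↥f.ker, y ∈ gammaP p (n + 1) ∧ x = y ^ p})) := by
  show Subgroup.map _ _ = _
  rw [gammaP_def2, MonoidHom.map_closure]

theorem CP_def2 (n : ℕ) : CP s p (n+2) = Subgroup.closure (s ''
    ({x : C | ∃ g y : C, y ∈ gammaP p (n + 1) ∧ x = ⁅g, y⁆} ∪
     {x : C | ∃ y : C, y ∈ gammaP p (n + 1) ∧ x = y ^ p})) := by
  show Subgroup.map _ _ = _
  rw [gammaP_def2, MonoidHom.map_closure]

/-- conjugation by an element of `B` restricted to the kernel -/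
def conjKer (b : B) : ↥f.ker →* ↥f.ker where
  toFun a := ⟨b * (a : B) * b⁻¹, (f.normal_ker).conj_mem _ a.2 b⟩
  map_one' := by ext; simp
  map_mul' a₁ a₂ := by ext; simp [mul_assoc]

instance AP_normal (n : ℕ) : (AP f p n).Normal := by
  constructor
  rintro x ⟨a, ha, rfl⟩ b
  refine ⟨conjKer f b a, gammaP_map_le (conjKer f b) n ⟨a, ha, rfl⟩, ?_⟩
  rfl

variable {f s p}

section WithHyp

variable (hSA : ⁅s.range, f.ker⁆ ≤ AP f p 2)

include hSA

theorem FR1 (k : ℕ) : ⁅s.range, AP f p (k+1)⁆ ≤ AP f p (k+2) := by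
  induction k with
  | zero => simpa [AP_one] using hSA
  | succ k IH =>
    haveI : (AP f p (k+3)).Normal := AP_normal f p (k+3)
    refine comm_le_of_le (N := AP f p (k+3)) (le_of_eq (Subgroup.closure_eq _).symm)
      (le_of_eq (AP_def2 f p k)) ?_
    rintro x hx y hy
    obtain ⟨c, rfl⟩ := hx
    rcases hy with ⟨w, hw, rfl⟩
    rcases hw with ⟨g, y', hy', rfl⟩ | ⟨y', hy', rfl⟩
    · have e : (f.ker.subtype ⁅g, y'⁆) = ⁅(g : B), (y' : B)⁆ := by
        simp [commutatorElement_def]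
      rw [e]
      have e2 : ⁅s c, ⁅(g : B), (y' : B)⁆⁆ = ⁅⁅(g : B), (y' : B)⁆, s c⁆⁻¹ := by group
      rw [e2]
      refine Subgroup.inv_mem _ ?_
      have hZc : Subgroup.closure {s c} ≤ s.range :=
        (Subgroup.closure_le _).mpr (by simp [Set.singleton_subset_iff])
      have hZg : Subgroup.closure {(g : B)} ≤ AP f p 1 :=
        (Subgroup.closure_le _).mpr (by
          simp only [Set.singleton_subset_iff, SetLike.mem_coe, AP_one]
          exact g.2)
      have hZy : Subgroup.closure {(y' : B)} ≤ AP f p (k+1) :=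
        (Subgroup.closure_le _).mpr (by
          simp only [Set.singleton_subset_iff, SetLike.mem_coe]
          exact ⟨y', hy', rfl⟩)
      have h1 : ⁅⁅Subgroup.closure {(y' : B)}, Subgroup.closure {s c}⁆,
          Subgroup.closure {(g : B)}⁆ ≤ AP f p (k+3) := by
        have s1 : ⁅Subgroup.closure {(y' : B)}, Subgroup.closure {s c}⁆ ≤ AP f p (k+2) := by
          rw [Subgroup.commutator_comm]
          exact le_trans (Subgroup.commutator_mono hZc hZy) IH
        refine le_trans (Subgroup.commutator_mono s1 hZg) ?_
        exact AP_comm f p (k+1) 0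
      have h2 : ⁅⁅Subgroup.closure {s c}, Subgroup.closure {(g : B)}⁆,
          Subgroup.closure {(y' : B)}⁆ ≤ AP f p (k+3) := by
        have s1 : ⁅Subgroup.closure {s c}, Subgroup.closure {(g : B)}⁆ ≤ AP f p 2 := by
          refine le_trans (Subgroup.commutator_mono hZc ?_) hSA
          exact le_trans hZg (le_of_eq (AP_one f p))
        refine le_trans (Subgroup.commutator_mono s1 hZy) ?_
        have := AP_comm f p 1 k
        simpa [show 1+k+2 = k+3 by omega] using this
      have Htr := triple_comm_le (N := AP f p (k+3)) h1 h2
      exact Htr (Subgroup.commutator_mem_commutator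
        (Subgroup.commutator_mem_commutator (Subgroup.subset_closure rfl)
          (Subgroup.subset_closure rfl)) (Subgroup.subset_closure rfl))
    · have e : (f.ker.subtype (y' ^ p)) = ((y' : B)) ^ p := rfl
      rw [e]
      have hm : ⁅s c, (y' : B)⁆ ∈ AP f p (k+2) :=
        IH (Subgroup.commutator_mem_commutator ⟨c, rfl⟩ ⟨y', hy', rfl⟩)
      refine comm_pow_mem p ?_ ?_
      · refine AP_comm f p (k+1) 0 ?_
        refine Subgroup.commutator_mem_commutator hm ?_
        rw [AP_one]
        exact y'.2
      · obtain ⟨a, ha, hae⟩ := hm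
        refine ⟨a ^ p, pow_mem_gammaP ha, ?_⟩
        rw [map_pow, hae]

theorem FR (m k : ℕ) : ⁅CP s p (m+1), AP f p (k+1)⁆ ≤ AP f p (m+k+2) := by
  induction m generalizing k with
  | zero =>
    rw [CP_one]
    simpa using FR1 hSA k
  | succ m IH =>
    rw [show m+1+k+2 = m+k+3 from by omega]
    haveI : (AP f p (m+k+3)).Normal := AP_normal f p (m+k+3)
    show ⁅CP s p (m+2), AP f p (k+1)⁆ ≤ AP f p (m+k+3)
    refine comm_le_of_le (N := AP f p (m+k+3)) (le_of_eq (CP_def2 s p m))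
      (le_of_eq (Subgroup.closure_eq _).symm) ?_
    rintro x hx y hy
    rcases hx with ⟨w, hw, rfl⟩
    rcases hw with ⟨g, c', hc', rfl⟩ | ⟨c', hc', rfl⟩
    · rw [map_commutatorElement]
      have hZg : Subgroup.closure {s g} ≤ s.range :=
        (Subgroup.closure_le _).mpr (by simp [Set.singleton_subset_iff])
      have hZc : Subgroup.closure {s c'} ≤ CP s p (m+1) :=
        (Subgroup.closure_le _).mpr (by
          simp only [Set.singleton_subset_iff, SetLike.mem_coe]
          exact ⟨c', hc', rfl⟩)
      have hZy : Subgroup.closure {y} ≤ AP f p (k+1) :=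
        (Subgroup.closure_le _).mpr (by
          simp only [Set.singleton_subset_iff, SetLike.mem_coe]
          exact hy)
      have h1 : ⁅⁅Subgroup.closure {s c'}, Subgroup.closure {y}⁆,
          Subgroup.closure {s g}⁆ ≤ AP f p (m+k+3) := by
        have s1 : ⁅Subgroup.closure {s c'}, Subgroup.closure {y}⁆ ≤ AP f p (m+k+2) :=
          le_trans (Subgroup.commutator_mono hZc hZy) (IH k)
        rw [Subgroup.commutator_comm]
        refine le_trans (Subgroup.commutator_mono hZg s1) ?_
        have := FR1 hSA (m+k+1)
        simpa [show m+k+1+2 = m+k+3 by omega, show m+k+1+1 = m+k+2 by omega] using this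
      have h2 : ⁅⁅Subgroup.closure {y}, Subgroup.closure {s g}⁆,
          Subgroup.closure {s c'}⁆ ≤ AP f p (m+k+3) := by
        have s1 : ⁅Subgroup.closure {y}, Subgroup.closure {s g}⁆ ≤ AP f p (k+2) := by
          rw [Subgroup.commutator_comm]
          exact le_trans (Subgroup.commutator_mono hZg hZy) (FR1 hSA k)
        rw [Subgroup.commutator_comm]
        refine le_trans (Subgroup.commutator_mono hZc s1) ?_
        have := IH (k+1)
        simpa [show m+(k+1)+2 = m+k+3 by omega] using this
      have Htr := triple_comm_le (N := AP f p (m+k+3)) h1 h2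
      exact Htr (Subgroup.commutator_mem_commutator
        (Subgroup.commutator_mem_commutator (Subgroup.subset_closure rfl)
          (Subgroup.subset_closure rfl)) (Subgroup.subset_closure rfl))
    · rw [map_pow]
      have hm : ⁅s c', y⁆ ∈ AP f p (m+k+2) :=
        IH k (Subgroup.commutator_mem_commutator ⟨c', hc', rfl⟩ hy)
      refine comm_pow_mem' p ?_ ?_
      · have hmm : ⁅⁅s c', y⁆, s c'⁆ ∈ ⁅AP f p (m+k+2), s.range⁆ :=
          Subgroup.commutator_mem_commutator hm ⟨c', rfl⟩
        rw [Subgroup.commutator_comm] at hmm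
        have := FR1 hSA (m+k+1)
        have h3 := this hmm
        simpa [show m+k+1+2 = m+k+3 by omega] using h3
      · obtain ⟨a, ha, hae⟩ := hm
        refine ⟨a ^ p, pow_mem_gammaP ha, ?_⟩
        rw [map_pow, hae]

theorem LB (hs : ∀ c, f (s c) = c) (n : ℕ) :
    ⁅(⊤ : Subgroup B), AP f p (n+1)⁆ ≤ AP f p (n+2) := by
  haveI : (AP f p (n+2)).Normal := AP_normal f p (n+2)
  refine comm_le_of_le (N := AP f p (n+2)) (S := (↑f.ker ∪ ↑s.range : Set B))
    (T := (↑(AP f p (n+1)) : Set B)) ?_ (le_of_eq (Subgroup.closure_eq _).symm) ?_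
  · rw [Subgroup.closure_union, Subgroup.closure_eq, Subgroup.closure_eq]
    intro b _
    have hu : b * (s (f b))⁻¹ ∈ f.ker := by
      rw [MonoidHom.mem_ker]
      simp [hs]
    have e : (b * (s (f b))⁻¹) * s (f b) = b := by group
    rw [← e]
    exact Subgroup.mul_mem _ (Subgroup.mem_sup_left hu)
      (Subgroup.mem_sup_right ⟨f b, rfl⟩)
  · rintro x hx y hy
    rcases hx with hx | hx
    · have h := AP_comm f p 0 n
      have h2 := h (Subgroup.commutator_mem_commutator (by rw [AP_one]; exact hx) hy)
      simpa using h2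
    · obtain ⟨c, rfl⟩ := hx
      exact FR1 hSA n (Subgroup.commutator_mem_commutator ⟨c, rfl⟩ hy)


omit hSA in
theorem top_le_kr (hs : ∀ c, f (s c) = c) (b : B) : b ∈ f.ker ⊔ s.range := by
  have hu : b * (s (f b))⁻¹ ∈ f.ker := by
    rw [MonoidHom.mem_ker]
    simp [hs]
  have e : (b * (s (f b))⁻¹) * s (f b) = b := by group
  rw [← e]
  exact Subgroup.mul_mem _ (Subgroup.mem_sup_left hu) (Subgroup.mem_sup_right ⟨f b, rfl⟩)

theorem P_normal (hs : ∀ c, f (s c) = c) (n : ℕ) :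
    (AP f p (n+1) ⊔ CP s p (n+1)).Normal := by
  set P := AP f p (n+1) ⊔ CP s p (n+1) with hP
  have claimC : ∀ x ∈ P, ∀ c : C, s c * x * (s c)⁻¹ ∈ P := by
    intro x hx c
    have hle : P ≤ Subgroup.comap (MulAut.conj (s c)).toMonoidHom P := by
      rw [hP]
      refine sup_le ?_ ?_
      · intro z hz
        rw [Subgroup.mem_comap]
        exact Subgroup.mem_sup_left ((AP_normal f p (n+1)).conj_mem z hz (s c))
      · rintro _ ⟨c', hc', rfl⟩
        rw [Subgroup.mem_comap]
        have e : (MulAut.conj (s c)).toMonoidHom (s c') = s (c * c' * c⁻¹) := by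
          simp [MulAut.conj_apply]
        rw [e]
        exact Subgroup.mem_sup_right ⟨c * c' * c⁻¹, (gammaP_normal (n+1)).conj_mem c' hc' c, rfl⟩
    have h2 := hle hx
    rwa [Subgroup.mem_comap] at h2
  have claimA : ∀ x ∈ P, ∀ u : B, u ∈ f.ker → u * x * u⁻¹ ∈ P := by
    intro x hx u hu
    have hle : P ≤ Subgroup.comap (MulAut.conj u).toMonoidHom P := by
      rw [hP]
      refine sup_le ?_ ?_
      · intro z hz
        rw [Subgroup.mem_comap]
        exact Subgroup.mem_sup_left ((AP_normal f p (n+1)).conj_mem z hz u)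
      · rintro _ ⟨c', hc', rfl⟩
        rw [Subgroup.mem_comap]
        have e : (MulAut.conj u).toMonoidHom (s c') = ⁅u, s c'⁆ * s c' := by
          show u * s c' * u⁻¹ = _
          group
        rw [e]
        refine Subgroup.mul_mem _ ?_ (Subgroup.mem_sup_right ⟨c', hc', rfl⟩)
        have h2 : ⁅s c', u⁆ ∈ AP f p (n+2) :=
          FR hSA n 0 (Subgroup.commutator_mem_commutator ⟨c', hc', rfl⟩
            (by rw [AP_one]; exact hu))
        have e2 : ⁅u, s c'⁆ = ⁅s c', u⁆⁻¹ := by group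
        rw [e2]
        exact Subgroup.mem_sup_left (AP_le_of_le f p (by omega) (Subgroup.inv_mem _ h2))
    have h2 := hle hx
    rwa [Subgroup.mem_comap] at h2
  constructor
  intro x hx g
  have hu : g * (s (f g))⁻¹ ∈ f.ker := by
    rw [MonoidHom.mem_ker]
    simp [hs]
  have e : g * x * g⁻¹ =
      (g * (s (f g))⁻¹) * (s (f g) * x * (s (f g))⁻¹) * (g * (s (f g))⁻¹)⁻¹ := by group
  rw [e]
  exact claimA _ (claimC x hx (f g)) _ hu

theorem main_le (hs : ∀ c, f (s c) = c) (n : ℕ) :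
    gammaP p (n+1) (G := B) ≤ AP f p (n+1) ⊔ CP s p (n+1) := by
  induction n with
  | zero =>
    show gammaP p 1 (G := B) ≤ AP f p 1 ⊔ CP s p 1
    rw [AP_one, CP_one]
    exact fun b _ => top_le_kr hs b
  | succ n IH =>
    haveI hPN : (AP f p (n+2) ⊔ CP s p (n+2)).Normal := P_normal hSA hs (n+1)
    rw [gammaP_def2]
    apply Subgroup.closure_le _ |>.mpr
    rintro x (⟨g, y, hy, rfl⟩ | ⟨y, hy, rfl⟩)
    · have Hcomm : ⁅(⊤ : Subgroup B), AP f p (n+1) ⊔ CP s p (n+1)⁆ ≤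
          AP f p (n+2) ⊔ CP s p (n+2) := by
        refine comm_le_of_le (S := (↑f.ker ∪ ↑s.range : Set B))
          (T := (↑(AP f p (n+1)) ∪ ↑(CP s p (n+1)) : Set B)) ?_ ?_ ?_
        · rw [Subgroup.closure_union, Subgroup.closure_eq, Subgroup.closure_eq]
          exact fun b _ => top_le_kr hs b
        · rw [Subgroup.closure_union, Subgroup.closure_eq, Subgroup.closure_eq]
        · rintro x (hx | hx) y (hy' | hy')
          · have h := AP_comm f p 0 n (Subgroup.commutator_mem_commutator
              (by rw [AP_one]; exact hx) hy')
            have h' : ⁅x, y⁆ ∈ AP f p (n+2) := by simpa using h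
            exact Subgroup.mem_sup_left h'
          · have h := FR hSA n 0 (Subgroup.commutator_mem_commutator hy'
              (by rw [AP_one]; exact hx))
            have e : ⁅x, y⁆ = ⁅y, x⁆⁻¹ := by group
            rw [e]
            exact Subgroup.mem_sup_left (Subgroup.inv_mem _ h)
          · obtain ⟨c, rfl⟩ := hx
            exact Subgroup.mem_sup_left
              (FR1 hSA n (Subgroup.commutator_mem_commutator ⟨c, rfl⟩ hy'))
          · obtain ⟨c, rfl⟩ := hx
            obtain ⟨c', hc', rfl⟩ := hy'
            rw [← map_commutatorElement]
            exact Subgroup.mem_sup_right ⟨⁅c, c'⁆, comm_mem_gammaP c hc', rfl⟩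
      exact Hcomm (Subgroup.commutator_mem_commutator (Subgroup.mem_top g) (IH hy))
    · have hyP := IH hy
      have hyP' : y ∈ ((AP f p (n+1) : Set B) * (CP s p (n+1) : Set B)) := by
        rw [← Subgroup.normal_mul]
        exact hyP
      obtain ⟨u, hu, v, hv, rfl⟩ := hyP'
      have hcomm_uv : ⁅u, v⁆ ∈ AP f p (n+2) := by
        have h1 : ⁅v, u⁆ ∈ AP f p (n+n+2) :=
          FR hSA n n (Subgroup.commutator_mem_commutator hv hu)
        have e : ⁅u, v⁆ = ⁅v, u⁆⁻¹ := by group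
        rw [e]
        exact AP_le_of_le f p (by omega) (Subgroup.inv_mem _ h1)
      obtain ⟨w, hw, he⟩ := mul_pow_mem_mul (N := AP f p (n+2)) hcomm_uv p
      rw [he]
      refine Subgroup.mul_mem _ (Subgroup.mem_sup_left hw) (Subgroup.mul_mem _ ?_ ?_)
      · exact Subgroup.mem_sup_left (AP_pow f p hu)
      · exact Subgroup.mem_sup_right (CP_pow s p hv)

theorem key_mem (hs : ∀ c, f (s c) = c) (n : ℕ) (b : B) (hb : b ∈ f.ker)
    (hg : b ∈ gammaP p n (G := B)) : (⟨b, hb⟩ : ↥f.ker) ∈ gammaP p n (G := ↥f.ker) := by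
  cases n with
  | zero => exact Subgroup.mem_top _
  | succ n =>
    have h1 := main_le hSA hs n hg
    have h2 : b ∈ ((AP f p (n+1) : Set B) * (CP s p (n+1) : Set B)) := by
      rw [← Subgroup.normal_mul]
      exact h1
    obtain ⟨u, hu, v, hv, he⟩ := h2
    obtain ⟨a, ha, rfl⟩ := hu
    obtain ⟨c', hc', rfl⟩ := hv
    have ha1 : f (a : B) = 1 := a.2
    have hc1 : c' = 1 := by
      have hfb : f b = 1 := hb
      rw [← he] at hfb
      simpa [ha1, hs] using hfb
    subst hc1
    simp only [map_one, mul_one] at he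
    have heq : (⟨b, hb⟩ : ↥f.ker) = a := Subtype.ext he.symm
    rw [heq]
    exact ha

end WithHyp

end Almost

end GammaAux


/-- A group `G` is residually `p`-finite if every nontrivial element is detected by a
homomorphism onto a finite `p`-group. -/
def IsResiduallyPFinite (p : ℕ) (G : Type*) [Group G] : Prop :=
  ∀ g : G, g ≠ 1 →
    ∃ (H : Type) (_ : Group H) (_ : Finite H) (φ : G →* H), IsPGroup p H ∧ φ g ≠ 1

/-- A `p`-almost direct product of finitely generated residually `p`-finite groups is
residually `p`-finite. -/
theorem statement4 (p : ℕ) (hp : p.Prime)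
    {B C : Type*} [Group B] [Group C]
    (f : B →* C) (hf : Function.Surjective f)
    (s : C →* B) (hs : ∀ c, f (s c) = c)
    (hadp : ∀ a ∈ f.ker, ∀ c : C,
      s c * a * (s c)⁻¹ * a⁻¹ ∈ (gammaP p 2 : Subgroup ↥f.ker).map f.ker.subtype)
    (hA : Group.FG ↥f.ker) (hC : Group.FG C)
    (hresA : IsResiduallyPFinite p ↥f.ker) (hresC : IsResiduallyPFinite p C) :
    IsResiduallyPFinite p B := by
  intro b hb
  by_cases hfb : f b = 1
  · have hbker : b ∈ f.ker := MonoidHom.mem_ker.mpr hfb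
    have ha1 : (⟨b, hbker⟩ : ↥f.ker) ≠ 1 := by
      intro h
      exact hb (by simpa [Subtype.ext_iff] using h)
    obtain ⟨H, hG, hF, φ, hpg, hne⟩ := hresA ⟨b, hbker⟩ ha1
    obtain ⟨n, hn⟩ := GammaAux.gammaP_eventually_bot (G := H) hp hpg
    have hna : (⟨b, hbker⟩ : ↥f.ker) ∉ gammaP p (n+1) (G := ↥f.ker) := by
      intro hmem
      have h2 : φ ⟨b, hbker⟩ ∈ gammaP p (n+1) (G := H) :=
        GammaAux.gammaP_map_le φ (n+1) ⟨_, hmem, rfl⟩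
      rw [hn, Subgroup.mem_bot] at h2
      exact hne h2
    have hSA : ⁅s.range, f.ker⁆ ≤ GammaAux.AP f p 2 := by
      rw [Subgroup.commutator_le]
      rintro g₁ ⟨c, rfl⟩ g₂ hg₂
      show s c * g₂ * (s c)⁻¹ * g₂⁻¹ ∈ _
      exact hadp g₂ hg₂ c
    have hnb : b ∉ gammaP p (n+1) (G := B) := fun hmem =>
      hna (GammaAux.key_mem hSA hs (n+1) b hbker hmem)
    haveI hBfg : Group.FG B := by
      obtain ⟨SA, hSAcl, hSAfin⟩ := Group.fg_iff.mp hA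
      obtain ⟨SC, hSCcl, hSCfin⟩ := Group.fg_iff.mp hC
      refine Group.fg_iff.mpr ⟨f.ker.subtype '' SA ∪ s '' SC, ?_,
        (hSAfin.image _).union (hSCfin.image _)⟩
      rw [Subgroup.closure_union, ← MonoidHom.map_closure, ← MonoidHom.map_closure,
        hSAcl, hSCcl, ← MonoidHom.range_eq_map, ← MonoidHom.range_eq_map,
        Subgroup.range_subtype]
      exact le_antisymm le_top (fun x _ => GammaAux.top_le_kr hs x)
    exact GammaAux.detect hp hnb
  · obtain ⟨H, hG, hF, φ, hpg, hne⟩ := hresC (f b) hfb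
    exact ⟨H, hG, hF, φ.comp f, hpg, hne⟩
end

section
/- Let A and C be groups and φ : C → Aut(A) an action such that φ(c)(a)·a⁻¹ ∈ γ_2² A for every c ∈ C and a ∈ A (so that the semidirect product B = A ⋊_φ C is a 2-almost direct product of A and C). Then for every k ≥ 0, the k-th power of the augmentation ideal of F₂[B] decomposes as Ī(B)^k = Σ_{i+h=k} ι_A(Ī(A)^i) · ι_C(Ī(C)^h), the sum over all nonnegative integers i, h with i + h = k of the F₂-linear spans of the products ι_A(x)·ι_C(y) with x ∈ Ī(A)^i and y ∈ Ī(C)^h, with the convention that the 0-th power of an augmentation ideal is the whole group algebra. -/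
open scoped commutatorElement

/-- `γ₂² G`: the subgroup of `G` generated by all commutators and all squares. -/
def gammaTwoTwo (G : Type*) [Group G] : Subgroup G :=
  Subgroup.closure ({x : G | ∃ a b : G, x = ⁅a, b⁆} ∪ {x : G | ∃ a : G, x = a ^ 2})

/-- The augmentation ideal `Ī(G) ⊆ k[G]`, as a `k`-submodule of the group algebra:
the kernel of the augmentation map sending each group element to `1`. -/
noncomputable def augIdeal (k : Type*) (G : Type*) [CommSemiring k] [Group G] :
    Submodule k (MonoidAlgebra k G) :=
  LinearMap.ker ((MonoidAlgebra.lift k k G) 1).toLinearMap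

/-- Powers of the augmentation ideal, with the convention that the `0`-th power is
the whole group algebra. -/
noncomputable def augPow (k : Type*) (G : Type*) [CommSemiring k] [Group G] (n : ℕ) :
    Submodule k (MonoidAlgebra k G) :=
  if n = 0 then ⊤ else (augIdeal k G) ^ n

/-- The ring (algebra) homomorphism `k[G] → k[H]` induced by a group homomorphism `G → H`. -/
noncomputable def iotaHom (k : Type*) [CommSemiring k] {G H : Type*} [Group G] [Group H]
    (f : G →* H) : MonoidAlgebra k G →ₐ[k] MonoidAlgebra k H :=
  (MonoidAlgebra.lift k (MonoidAlgebra k H) G) ((MonoidAlgebra.of k H).comp f)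

section GeneralLemmas

variable {k : Type*} [CommRing k] {G H : Type*} [Group G] [Group H]

lemma mem_augIdeal {x : MonoidAlgebra k G} :
    x ∈ augIdeal k G ↔ (MonoidAlgebra.lift k k G) 1 x = 0 := by
  simp [augIdeal, LinearMap.mem_ker]

lemma counit_of (g : G) : (MonoidAlgebra.lift k k G) 1 (MonoidAlgebra.of k G g) = 1 := by
  simp

lemma iotaHom_of (f : G →* H) (g : G) :
    iotaHom k f (MonoidAlgebra.of k G g) = MonoidAlgebra.of k H (f g) := by
  simp [iotaHom]

lemma counit_iota (f : G →* H) (x : MonoidAlgebra k G) :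
    (MonoidAlgebra.lift k k H) 1 (iotaHom k f x) = (MonoidAlgebra.lift k k G) 1 x := by
  have h : ((MonoidAlgebra.lift k k H) 1).comp (iotaHom k f) = (MonoidAlgebra.lift k k G) 1 := by
    apply MonoidAlgebra.algHom_ext
    intro g
    show ((MonoidAlgebra.lift k k H) 1) (iotaHom k f (MonoidAlgebra.of k G g)) = _
    rw [iotaHom_of]
    simp
    exact Subsingleton.elim _ _
  exact DFunLike.congr_fun h x

lemma augPow_zero : augPow k G 0 = ⊤ := if_pos rfl
lemma augPow_succ (n : ℕ) : augPow k G (n + 1) = augIdeal k G ^ (n + 1) := if_neg n.succ_ne_zero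
lemma augPow_one : augPow k G 1 = augIdeal k G := by
  rw [show (1 : ℕ) = 0 + 1 from rfl, augPow_succ, pow_one]

lemma top_mul_augIdeal : (⊤ : Submodule k (MonoidAlgebra k G)) * augIdeal k G ≤ augIdeal k G := by
  rw [Submodule.mul_le]
  intro m _ n hn
  rw [mem_augIdeal] at *
  rw [map_mul, hn, mul_zero]

lemma augIdeal_mul_top : augIdeal k G * (⊤ : Submodule k (MonoidAlgebra k G)) ≤ augIdeal k G := by
  rw [Submodule.mul_le]
  intro m hm n _
  rw [mem_augIdeal] at *
  rw [map_mul, hm, zero_mul]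

lemma top_mul_augPowS (n : ℕ) :
    (⊤ : Submodule k (MonoidAlgebra k G)) * augIdeal k G ^ (n + 1) ≤ augIdeal k G ^ (n + 1) := by
  rw [pow_succ', ← mul_assoc]
  exact mul_le_mul' top_mul_augIdeal le_rfl

lemma augPowS_mul_top (n : ℕ) :
    augIdeal k G ^ (n + 1) * (⊤ : Submodule k (MonoidAlgebra k G)) ≤ augIdeal k G ^ (n + 1) := by
  rw [pow_succ, mul_assoc]
  exact mul_le_mul' le_rfl augIdeal_mul_top

lemma le_top_mul (M : Submodule k (MonoidAlgebra k G)) : M ≤ ⊤ * M := fun x hx => by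
  simpa using Submodule.mul_mem_mul (Submodule.mem_top (x := (1 : MonoidAlgebra k G))) hx

lemma le_mul_top (M : Submodule k (MonoidAlgebra k G)) : M ≤ M * ⊤ := fun x hx => by
  simpa using Submodule.mul_mem_mul hx (Submodule.mem_top (x := (1 : MonoidAlgebra k G)))

lemma augPow_mul (m n : ℕ) : augPow k G m * augPow k G n = augPow k G (m + n) := by
  rcases m with _ | m <;> rcases n with _ | n
  · simp only [Nat.add_zero, augPow_zero]
    exact le_antisymm le_top (le_top_mul _)
  · simp only [Nat.zero_add, augPow_zero, augPow_succ]
    exact le_antisymm (top_mul_augPowS n) (le_top_mul _)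
  · simp only [Nat.add_zero, augPow_zero, augPow_succ]
    exact le_antisymm (augPowS_mul_top m) (le_mul_top _)
  · simp only [augPow_succ, ← pow_add]
    rw [show m + 1 + (n + 1) = m + n + 1 + 1 by omega, augPow_succ]

lemma augPow_pow_succ_le (n : ℕ) :
    augIdeal k G ^ (n + 1) ≤ augIdeal k G * augPow k G n := by
  cases n with
  | zero => rw [pow_one, augPow_zero]; exact le_mul_top _
  | succ n => rw [augPow_succ, ← pow_succ']

lemma myPow_le_pow {M N : Submodule k (MonoidAlgebra k H)} (h : M ≤ N) :
    ∀ n, M ^ n ≤ N ^ n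
  | 0 => le_rfl
  | n + 1 => by
    rw [pow_succ, pow_succ]
    exact mul_le_mul' (myPow_le_pow h n) h

lemma iota_map_augIdeal (f : G →* H) :
    (augIdeal k G).map (iotaHom k f).toLinearMap ≤ augIdeal k H := by
  rintro x ⟨y, hy, rfl⟩
  rw [mem_augIdeal] at *
  rw [AlgHom.toLinearMap_apply, counit_iota]
  exact hy

lemma iota_map_augPow (f : G →* H) (n : ℕ) :
    (augPow k G n).map (iotaHom k f).toLinearMap ≤ augPow k H n := by
  cases n with
  | zero => rw [augPow_zero (k := k) (G := H)]; exact le_top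
  | succ n =>
    rw [augPow_succ, augPow_succ, Submodule.map_pow]
    exact myPow_le_pow (iota_map_augIdeal f) _

lemma iota_mem_augPow (f : G →* H) {n : ℕ} {x : MonoidAlgebra k G} (hx : x ∈ augPow k G n) :
    iotaHom k f x ∈ augPow k H n :=
  iota_map_augPow f n ⟨x, hx, rfl⟩

lemma top_le_span_of :
    (⊤ : Submodule k (MonoidAlgebra k G)) ≤ Submodule.span k (Set.range (MonoidAlgebra.of k G)) := by
  intro x hx
  clear hx
  induction x using MonoidAlgebra.induction_on with
  | of g => exact Submodule.subset_span ⟨g, rfl⟩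
  | add f g hf hg => exact add_mem hf hg
  | smul r f hf => exact Submodule.smul_mem _ r hf

lemma augIdeal_le_span :
    augIdeal k G ≤ Submodule.span k {x : MonoidAlgebra k G | ∃ g : G, x = MonoidAlgebra.of k G g - 1} := by
  intro x hx
  rw [mem_augIdeal] at hx
  have key : ∀ y : MonoidAlgebra k G,
      y - ((MonoidAlgebra.lift k k G) 1 y) • 1 ∈
        Submodule.span k {x : MonoidAlgebra k G | ∃ g : G, x = MonoidAlgebra.of k G g - 1} := by
    intro y
    induction y using MonoidAlgebra.induction_on with
    | of g =>
      have h1 : MonoidAlgebra.of k G g - ((MonoidAlgebra.lift k k G) 1 (MonoidAlgebra.of k G g)) • 1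
          = MonoidAlgebra.of k G g - 1 := by
        rw [counit_of, one_smul]
      rw [h1]
      exact Submodule.subset_span ⟨g, rfl⟩
    | add f g hf hg =>
      have h1 : (f + g) - ((MonoidAlgebra.lift k k G) 1 (f + g)) • 1
          = (f - ((MonoidAlgebra.lift k k G) 1 f) • 1) + (g - ((MonoidAlgebra.lift k k G) 1 g) • 1) := by
        rw [map_add, add_smul]
        abel
      rw [h1]
      exact add_mem hf hg
    | smul r f hf =>
      have h1 : r • f - ((MonoidAlgebra.lift k k G) 1 (r • f)) • 1
          = r • (f - ((MonoidAlgebra.lift k k G) 1 f) • 1) := by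
        rw [map_smul, smul_sub, smul_smul, smul_eq_mul]
      rw [h1]
      exact Submodule.smul_mem _ r hf
  have h2 := key x
  rwa [hx, zero_smul, sub_zero] at h2

lemma of_sub_one_mem (g : G) : MonoidAlgebra.of k G g - 1 ∈ augIdeal k G := by
  rw [mem_augIdeal, map_sub ((MonoidAlgebra.lift k k G) 1), map_one ((MonoidAlgebra.lift k k G) 1), counit_of, sub_self]

lemma mul_mem_augPow_pos {n : ℕ} (hn : n ≠ 0) (r : MonoidAlgebra k G) {x : MonoidAlgebra k G}
    (hx : x ∈ augIdeal k G ^ n) : r * x ∈ augIdeal k G ^ n := by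
  obtain ⟨m, rfl⟩ := Nat.exists_eq_succ_of_ne_zero hn
  exact top_mul_augPowS m (Submodule.mul_mem_mul Submodule.mem_top hx)

lemma mem_augPow_mul_pos {n : ℕ} (hn : n ≠ 0) (r : MonoidAlgebra k G) {x : MonoidAlgebra k G}
    (hx : x ∈ augIdeal k G ^ n) : x * r ∈ augIdeal k G ^ n := by
  obtain ⟨m, rfl⟩ := Nat.exists_eq_succ_of_ne_zero hn
  exact augPowS_mul_top m (Submodule.mul_mem_mul hx Submodule.mem_top)

end GeneralLemmas
section Gamma

variable {G : Type*} [Group G]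

lemma one_add_one_eq_zero' : (1 : MonoidAlgebra (ZMod 2) G) + 1 = 0 := by
  have h : ((1 : ZMod 2) + 1) = 0 := by decide
  calc (1 : MonoidAlgebra (ZMod 2) G) + 1
      = algebraMap (ZMod 2) (MonoidAlgebra (ZMod 2) G) (1 + 1) := by rw [map_add, map_one]
    _ = 0 := by rw [h, map_zero]

lemma gammaTwoTwo_sub_one {g : G} (hg : g ∈ gammaTwoTwo G) :
    MonoidAlgebra.of (ZMod 2) G g - 1 ∈ augIdeal (ZMod 2) G ^ 2 := by
  induction hg using Subgroup.closure_induction with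
  | mem x hx =>
    rcases hx with ⟨a, b, rfl⟩ | ⟨a, rfl⟩
    · -- commutator
      have h1 : (MonoidAlgebra.of (ZMod 2) G a - 1) * (MonoidAlgebra.of (ZMod 2) G b - 1)
            - (MonoidAlgebra.of (ZMod 2) G b - 1) * (MonoidAlgebra.of (ZMod 2) G a - 1)
          = MonoidAlgebra.of (ZMod 2) G a * MonoidAlgebra.of (ZMod 2) G b
            - MonoidAlgebra.of (ZMod 2) G b * MonoidAlgebra.of (ZMod 2) G a := by
        noncomm_ring
      have key : MonoidAlgebra.of (ZMod 2) G ⁅a, b⁆ - 1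
          = ((MonoidAlgebra.of (ZMod 2) G a - 1) * (MonoidAlgebra.of (ZMod 2) G b - 1)
              - (MonoidAlgebra.of (ZMod 2) G b - 1) * (MonoidAlgebra.of (ZMod 2) G a - 1)) *
            MonoidAlgebra.of (ZMod 2) G (a⁻¹ * b⁻¹) := by
        rw [h1, sub_mul, ← map_mul, ← map_mul, ← map_mul, ← map_mul]
        have e1 : a * b * (a⁻¹ * b⁻¹) = ⁅a, b⁆ := by
          rw [commutatorElement_def]; group
        have e2 : b * a * (a⁻¹ * b⁻¹) = 1 := by group
        rw [e1, e2, map_one]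
      rw [key]
      refine mem_augPow_mul_pos two_ne_zero _ ?_
      have hm : ∀ u v : G, (MonoidAlgebra.of (ZMod 2) G u - 1) * (MonoidAlgebra.of (ZMod 2) G v - 1)
          ∈ augIdeal (ZMod 2) G ^ 2 := by
        intro u v
        rw [pow_two]
        exact Submodule.mul_mem_mul (of_sub_one_mem u) (of_sub_one_mem v)
      exact sub_mem (hm a b) (hm b a)
    · -- square
      have key : MonoidAlgebra.of (ZMod 2) G (a ^ 2) - 1
          = (MonoidAlgebra.of (ZMod 2) G a - 1) ^ 2 := by
        have expand : (MonoidAlgebra.of (ZMod 2) G a ^ 2 - 1)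
              - (MonoidAlgebra.of (ZMod 2) G a - 1) ^ 2
            = (1 + 1) * MonoidAlgebra.of (ZMod 2) G a - (1 + 1) := by
          noncomm_ring
        rw [one_add_one_eq_zero', zero_mul, sub_zero] at expand
        rw [map_pow]
        exact sub_eq_zero.mp expand
      rw [key, pow_two, pow_two]
      exact Submodule.mul_mem_mul (of_sub_one_mem a) (of_sub_one_mem a)
  | one =>
    have h0 : MonoidAlgebra.of (ZMod 2) G 1 - 1 = 0 := by rw [map_one, sub_self]
    rw [h0]
    exact zero_mem _
  | mul x y hx hy ihx ihy =>
    have key : MonoidAlgebra.of (ZMod 2) G (x * y) - 1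
        = (MonoidAlgebra.of (ZMod 2) G x - 1) * (MonoidAlgebra.of (ZMod 2) G y - 1)
          + ((MonoidAlgebra.of (ZMod 2) G x - 1) + (MonoidAlgebra.of (ZMod 2) G y - 1)) := by
      rw [map_mul]
      noncomm_ring
    rw [key]
    refine add_mem ?_ (add_mem ihx ihy)
    rw [pow_two]
    exact Submodule.mul_mem_mul (of_sub_one_mem x) (of_sub_one_mem y)
  | inv x hx ih =>
    have key : MonoidAlgebra.of (ZMod 2) G x⁻¹ - 1
        = -(MonoidAlgebra.of (ZMod 2) G x⁻¹ * (MonoidAlgebra.of (ZMod 2) G x - 1)) := by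
      rw [mul_sub, ← map_mul, inv_mul_cancel, map_one, mul_one, neg_sub]
    rw [key]
    exact neg_mem (mul_mem_augPow_pos two_ne_zero _ ih)

end Gamma
section SDP

variable {A C : Type*} [Group A] [Group C] (φ : C →* MulAut A)

noncomputable def psiH (c : C) : MonoidAlgebra (ZMod 2) A →ₐ[ZMod 2] MonoidAlgebra (ZMod 2) A :=
  iotaHom (ZMod 2) ((φ c).toMonoidHom)

lemma psiH_of (c : C) (a : A) :
    psiH φ c (MonoidAlgebra.of (ZMod 2) A a) = MonoidAlgebra.of (ZMod 2) A (φ c a) := by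
  rw [psiH, iotaHom_of]
  rfl

lemma psiH_mem_augPow (c : C) {n : ℕ} {x : MonoidAlgebra (ZMod 2) A}
    (hx : x ∈ augPow (ZMod 2) A n) : psiH φ c x ∈ augPow (ZMod 2) A n :=
  iota_mem_augPow _ hx

lemma psiH_mem_pow (c : C) {n : ℕ} {x : MonoidAlgebra (ZMod 2) A}
    (hx : x ∈ augIdeal (ZMod 2) A ^ (n + 1)) : psiH φ c x ∈ augIdeal (ZMod 2) A ^ (n + 1) := by
  rw [← augPow_succ] at hx ⊢
  exact psiH_mem_augPow φ c hx

noncomputable def iAh : MonoidAlgebra (ZMod 2) A →ₐ[ZMod 2] MonoidAlgebra (ZMod 2) (A ⋊[φ] C) :=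
  iotaHom (ZMod 2) (SemidirectProduct.inl : A →* A ⋊[φ] C)

noncomputable def iCh : MonoidAlgebra (ZMod 2) C →ₐ[ZMod 2] MonoidAlgebra (ZMod 2) (A ⋊[φ] C) :=
  iotaHom (ZMod 2) (SemidirectProduct.inr : C →* A ⋊[φ] C)

lemma inr_mul_iAh (c : C) (x : MonoidAlgebra (ZMod 2) A) :
    MonoidAlgebra.of (ZMod 2) (A ⋊[φ] C) (SemidirectProduct.inr c) * iAh φ x
      = iAh φ (psiH φ c x) * MonoidAlgebra.of (ZMod 2) (A ⋊[φ] C) (SemidirectProduct.inr c) := by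
  induction x using MonoidAlgebra.induction_on with
  | of a =>
    rw [psiH_of, iAh, iotaHom_of, iotaHom_of, ← map_mul, ← map_mul]
    congr 1
    rw [SemidirectProduct.inl_aut]
    simp [mul_assoc]
  | add f g hf hg =>
    rw [map_add, map_add, map_add, mul_add, add_mul, hf, hg]
  | smul r f hf =>
    rw [map_smul, map_smul, map_smul, mul_smul_comm, smul_mul_assoc, hf]

lemma psiH_sub_self_one (hφ : ∀ (c : C) (a : A), φ c a * a⁻¹ ∈ gammaTwoTwo A) (c : C)
    {x : MonoidAlgebra (ZMod 2) A} (hx : x ∈ augIdeal (ZMod 2) A) :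
    psiH φ c x - x ∈ augIdeal (ZMod 2) A ^ 2 := by
  have hx' := augIdeal_le_span hx
  clear hx
  induction hx' using Submodule.span_induction with
  | mem w hw =>
    obtain ⟨g, rfl⟩ := hw
    have key : psiH φ c (MonoidAlgebra.of (ZMod 2) A g - 1) - (MonoidAlgebra.of (ZMod 2) A g - 1)
        = (MonoidAlgebra.of (ZMod 2) A (φ c g * g⁻¹) - 1) * MonoidAlgebra.of (ZMod 2) A g := by
      rw [map_sub, map_one, psiH_of, sub_mul, one_mul, ← map_mul, inv_mul_cancel_right]
      abel
    rw [key]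
    exact mem_augPow_mul_pos two_ne_zero _ (gammaTwoTwo_sub_one (hφ c g))
  | zero =>
    rw [map_zero, sub_zero]
    exact zero_mem _
  | add a b ha hb iha ihb =>
    have key : psiH φ c (a + b) - (a + b) = (psiH φ c a - a) + (psiH φ c b - b) := by
      rw [map_add]; abel
    rw [key]
    exact add_mem iha ihb
  | smul r a ha iha =>
    have key : psiH φ c (r • a) - r • a = r • (psiH φ c a - a) := by
      rw [map_smul, smul_sub]
    rw [key]
    exact Submodule.smul_mem _ r iha

lemma psiH_sub_self_pow (hφ : ∀ (c : C) (a : A), φ c a * a⁻¹ ∈ gammaTwoTwo A) (c : C) :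
    ∀ (n : ℕ) (x : MonoidAlgebra (ZMod 2) A), x ∈ augIdeal (ZMod 2) A ^ (n + 1) →
      psiH φ c x - x ∈ augIdeal (ZMod 2) A ^ (n + 2) := by
  intro n
  induction n with
  | zero =>
    intro x hx
    rw [pow_one] at hx
    exact psiH_sub_self_one φ hφ c hx
  | succ n IH =>
    intro x hx
    rw [pow_succ'] at hx
    refine Submodule.mul_induction_on hx (fun u hu v hv => ?_) (fun y z hy hz => ?_)
    · have key : psiH φ c (u * v) - u * v
          = (psiH φ c u - u) * psiH φ c v + u * (psiH φ c v - v) := by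
        rw [map_mul, sub_mul, mul_sub]
        abel
      rw [key]
      refine add_mem ?_ ?_
      · have h1 : psiH φ c u - u ∈ augIdeal (ZMod 2) A ^ 2 := by
          rw [← pow_one (augIdeal (ZMod 2) A)] at hu
          exact psiH_sub_self_one φ hφ c (by rwa [pow_one] at hu)
        have h2 : psiH φ c v ∈ augIdeal (ZMod 2) A ^ (n + 1) := psiH_mem_pow φ c hv
        have h3 := Submodule.mul_mem_mul h1 h2
        rw [← pow_add] at h3
        rwa [show 2 + (n + 1) = n + 1 + 2 by omega] at h3
      · have h1 : psiH φ c v - v ∈ augIdeal (ZMod 2) A ^ (n + 2) := IH v hv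
        have h3 := Submodule.mul_mem_mul hu h1
        rw [← pow_succ'] at h3
        rwa [show n + 2 + 1 = n + 1 + 2 by omega] at h3
    · have key : psiH φ c (y + z) - (y + z) = (psiH φ c y - y) + (psiH φ c z - z) := by
        rw [map_add]; abel
      rw [key]
      exact add_mem hy hz

lemma psiH_sub_self (hφ : ∀ (c : C) (a : A), φ c a * a⁻¹ ∈ gammaTwoTwo A) (c : C)
    {n : ℕ} {x : MonoidAlgebra (ZMod 2) A} (hx : x ∈ augPow (ZMod 2) A n) :
    psiH φ c x - x ∈ augPow (ZMod 2) A (n + 1) := by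
  rw [augPow_succ]
  cases n with
  | zero =>
    rw [pow_one, mem_augIdeal, map_sub ((MonoidAlgebra.lift (ZMod 2) (ZMod 2) A) 1)]
    rw [show psiH φ c x = iotaHom (ZMod 2) ((φ c).toMonoidHom) x from rfl, counit_iota, sub_self]
  | succ n =>
    rw [augPow_succ] at hx
    exact psiH_sub_self_pow φ hφ c n x hx

end SDP
section SDP2

variable {A C : Type*} [Group A] [Group C] (φ : C →* MulAut A)

noncomputable def MAs (i : ℕ) : Submodule (ZMod 2) (MonoidAlgebra (ZMod 2) (A ⋊[φ] C)) :=
  (augPow (ZMod 2) A i).map (iAh φ).toLinearMap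

noncomputable def MCs (h : ℕ) : Submodule (ZMod 2) (MonoidAlgebra (ZMod 2) (A ⋊[φ] C)) :=
  (augPow (ZMod 2) C h).map (iCh φ).toLinearMap

noncomputable def SSs (m : ℕ) : Submodule (ZMod 2) (MonoidAlgebra (ZMod 2) (A ⋊[φ] C)) :=
  ⨆ i ∈ Finset.range (m + 1), MAs φ i * MCs φ (m - i)

noncomputable def TTs (j m : ℕ) : Submodule (ZMod 2) (MonoidAlgebra (ZMod 2) (A ⋊[φ] C)) :=
  ⨆ s ∈ Finset.range (m + 1), MAs φ (j + s) * MCs φ (m - s)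

lemma iAh_of (a : A) :
    iAh φ (MonoidAlgebra.of (ZMod 2) A a)
      = MonoidAlgebra.of (ZMod 2) (A ⋊[φ] C) (SemidirectProduct.inl a) := iotaHom_of _ _

lemma iCh_of (c : C) :
    iCh φ (MonoidAlgebra.of (ZMod 2) C c)
      = MonoidAlgebra.of (ZMod 2) (A ⋊[φ] C) (SemidirectProduct.inr c) := iotaHom_of _ _

lemma mem_MAs {n : ℕ} {x : MonoidAlgebra (ZMod 2) A} (hx : x ∈ augPow (ZMod 2) A n) :
    iAh φ x ∈ MAs φ n := Submodule.mem_map_of_mem hx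

lemma mem_MCs {n : ℕ} {y : MonoidAlgebra (ZMod 2) C} (hy : y ∈ augPow (ZMod 2) C n) :
    iCh φ y ∈ MCs φ n := Submodule.mem_map_of_mem hy

lemma MAs_mul (a b : ℕ) : MAs φ a * MAs φ b = MAs φ (a + b) := by
  rw [MAs, MAs, MAs, ← Submodule.map_mul, augPow_mul]

lemma MCs_mul (a b : ℕ) : MCs φ a * MCs φ b = MCs φ (a + b) := by
  rw [MCs, MCs, MCs, ← Submodule.map_mul, augPow_mul]

lemma le_SSs {m a b : ℕ} (hab : a + b = m) : MAs φ a * MCs φ b ≤ SSs φ m := by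
  obtain rfl : b = m - a := by omega
  rw [SSs]
  exact le_iSup₂ (f := fun i _ => MAs φ i * MCs φ (m - i)) a (Finset.mem_range.mpr (by omega))

lemma le_TTs {j m : ℕ} (s : ℕ) {a b : ℕ} (hs : s ≤ m) (ha : a = j + s) (hb : b = m - s) :
    MAs φ a * MCs φ b ≤ TTs φ j m := by
  subst ha; subst hb
  rw [TTs]
  exact le_iSup₂ (f := fun s _ => MAs φ (j + s) * MCs φ (m - s)) s (Finset.mem_range.mpr (by omega))

lemma d_mul_mem (hφ : ∀ (c : C) (a : A), φ c a * a⁻¹ ∈ gammaTwoTwo A) (c : C) (J H : ℕ)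
    {z : MonoidAlgebra (ZMod 2) (A ⋊[φ] C)} (hz : z ∈ MAs φ J * MCs φ H) :
    (MonoidAlgebra.of (ZMod 2) (A ⋊[φ] C) (SemidirectProduct.inr c) - 1) * z
      ∈ MAs φ (J + 1) * MCs φ H ⊔ MAs φ J * MCs φ (H + 1) := by
  refine Submodule.mul_induction_on hz (fun p hp q hq => ?_) (fun y₁ y₂ h₁ h₂ => ?_)
  · rw [MAs, Submodule.mem_map] at hp
    rw [MCs, Submodule.mem_map] at hq
    obtain ⟨x, hx, rfl⟩ := hp
    obtain ⟨y, hy, rfl⟩ := hq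
    simp only [AlgHom.toLinearMap_apply]
    have e : MonoidAlgebra.of (ZMod 2) (A ⋊[φ] C) (SemidirectProduct.inr c) * (iAh φ x * iCh φ y)
        = iAh φ (psiH φ c x) *
            (MonoidAlgebra.of (ZMod 2) (A ⋊[φ] C) (SemidirectProduct.inr c) * iCh φ y) := by
      rw [← mul_assoc, inr_mul_iAh, mul_assoc]
    have key : (MonoidAlgebra.of (ZMod 2) (A ⋊[φ] C) (SemidirectProduct.inr c) - 1)
          * (iAh φ x * iCh φ y)
        = iAh φ (psiH φ c x - x) * iCh φ y
          + iAh φ (psiH φ c x) * iCh φ ((MonoidAlgebra.of (ZMod 2) C c - 1) * y) := by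
      rw [map_sub (iAh φ), map_mul (iCh φ), map_sub (iCh φ), map_one, iCh_of]
      simp only [sub_mul, mul_sub, one_mul]
      rw [e]
      abel
    rw [key]
    refine add_mem ?_ ?_
    · exact Submodule.mem_sup_left
        (Submodule.mul_mem_mul (mem_MAs φ (psiH_sub_self φ hφ c hx)) (mem_MCs φ hy))
    · have h1 : MonoidAlgebra.of (ZMod 2) C c - 1 ∈ augPow (ZMod 2) C 1 := by
        rw [augPow_one]; exact of_sub_one_mem c
      have h2 := Submodule.mul_mem_mul h1 hy
      rw [augPow_mul] at h2
      rw [show 1 + H = H + 1 by omega] at h2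
      exact Submodule.mem_sup_right
        (Submodule.mul_mem_mul (mem_MAs φ (psiH_mem_augPow φ c hx)) (mem_MCs φ h2))
  · rw [mul_add]
    exact add_mem h₁ h₂

lemma d_mul_TTs (hφ : ∀ (c : C) (a : A), φ c a * a⁻¹ ∈ gammaTwoTwo A) (c : C) (j h : ℕ)
    {w : MonoidAlgebra (ZMod 2) (A ⋊[φ] C)} (hw : w ∈ TTs φ j h) :
    (MonoidAlgebra.of (ZMod 2) (A ⋊[φ] C) (SemidirectProduct.inr c) - 1) * w
      ∈ TTs φ j (h + 1) := by
  have hle : (TTs φ j h).map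
      (LinearMap.mulLeft (ZMod 2)
        (MonoidAlgebra.of (ZMod 2) (A ⋊[φ] C) (SemidirectProduct.inr c) - 1)) ≤ TTs φ j (h + 1) := by
    rw [TTs]
    simp only [Submodule.map_iSup]
    refine iSup₂_le fun s hs => ?_
    rw [Finset.mem_range, Nat.lt_succ_iff] at hs
    rintro z hz
    rw [Submodule.mem_map] at hz
    obtain ⟨z0, hz0, rfl⟩ := hz
    rw [LinearMap.mulLeft_apply]
    have hd := d_mul_mem φ hφ c (j + s) (h - s) hz0
    have hA : MAs φ (j + s + 1) * MCs φ (h - s) ≤ TTs φ j (h + 1) :=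
      le_TTs φ (s + 1) (by omega) (by omega) (by omega)
    have hB : MAs φ (j + s) * MCs φ (h - s + 1) ≤ TTs φ j (h + 1) :=
      le_TTs φ s (by omega) (by omega) (by omega)
    exact sup_le hA hB hd
  exact hle (Submodule.mem_map_of_mem hw)

lemma moving (hφ : ∀ (c : C) (a : A), φ c a * a⁻¹ ∈ gammaTwoTwo A) (j : ℕ) :
    ∀ (h : ℕ) (y : MonoidAlgebra (ZMod 2) C), y ∈ augPow (ZMod 2) C h →
      ∀ (x : MonoidAlgebra (ZMod 2) A), x ∈ augPow (ZMod 2) A j →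
        iCh φ y * iAh φ x ∈ TTs φ j h := by
  intro h
  induction h with
  | zero =>
    intro y hy x hx
    clear hy
    have hmem : iCh φ y * iAh φ x ∈ MAs φ j * MCs φ 0 := by
      induction y using MonoidAlgebra.induction_on with
      | of c =>
        rw [iCh_of, inr_mul_iAh, ← iCh_of]
        have h2 : MonoidAlgebra.of (ZMod 2) C c ∈ augPow (ZMod 2) C 0 := by
          rw [augPow_zero]; exact Submodule.mem_top
        exact Submodule.mul_mem_mul (mem_MAs φ (psiH_mem_augPow φ c hx)) (mem_MCs φ h2)
      | add f g hf hg =>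
        rw [map_add, add_mul]
        exact add_mem hf hg
      | smul r f hf =>
        rw [map_smul, smul_mul_assoc]
        exact Submodule.smul_mem _ r hf
    exact le_TTs φ 0 (by omega) (by omega) (by omega) hmem
  | succ h IH =>
    intro y hy x hx
    rw [augPow_succ] at hy
    have hy' : y ∈ augIdeal (ZMod 2) C * augPow (ZMod 2) C h := augPow_pow_succ_le h hy
    clear hy
    refine Submodule.mul_induction_on hy' (fun u hu v hv => ?_) (fun a b ha hb => ?_)
    · have hu' := augIdeal_le_span hu
      clear hu
      induction hu' using Submodule.span_induction with
      | mem w hw =>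
        obtain ⟨c, rfl⟩ := hw
        have assoc1 : iCh φ ((MonoidAlgebra.of (ZMod 2) C c - 1) * v) * iAh φ x
            = (MonoidAlgebra.of (ZMod 2) (A ⋊[φ] C) (SemidirectProduct.inr c) - 1)
              * (iCh φ v * iAh φ x) := by
          rw [map_mul (iCh φ), map_sub (iCh φ), map_one, iCh_of, mul_assoc]
        rw [assoc1]
        exact d_mul_TTs φ hφ c j h (IH v hv x hx)
      | zero =>
        rw [zero_mul, map_zero, zero_mul]
        exact zero_mem _
      | add a b ha hb iha ihb =>
        rw [add_mul, map_add, add_mul]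
        exact add_mem iha ihb
      | smul r a ha iha =>
        rw [smul_mul_assoc, map_smul, smul_mul_assoc]
        exact Submodule.smul_mem _ r iha
    · rw [map_add, add_mul]
      exact add_mem ha hb

end SDP2
section SDP3

variable {A C : Type*} [Group A] [Group C] (φ : C →* MulAut A)

lemma MAMC_mul (hφ : ∀ (c : C) (a : A), φ c a * a⁻¹ ∈ gammaTwoTwo A) (i h j l : ℕ) :
    (MAs φ i * MCs φ h) * (MAs φ j * MCs φ l) ≤ SSs φ (i + h + j + l) := by
  have hmov : MCs φ h * MAs φ j ≤ TTs φ j h := by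
    rw [Submodule.mul_le]
    intro q hq p hp
    rw [MCs, Submodule.mem_map] at hq
    rw [MAs, Submodule.mem_map] at hp
    obtain ⟨y, hy, rfl⟩ := hq
    obtain ⟨x, hx, rfl⟩ := hp
    exact moving φ hφ j h y hy x hx
  calc (MAs φ i * MCs φ h) * (MAs φ j * MCs φ l)
      = MAs φ i * ((MCs φ h * MAs φ j) * MCs φ l) := by
        rw [mul_assoc (MAs φ i) (MCs φ h) (MAs φ j * MCs φ l),
          ← mul_assoc (MCs φ h) (MAs φ j) (MCs φ l)]
    _ ≤ MAs φ i * (TTs φ j h * MCs φ l) :=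
        mul_le_mul' le_rfl (mul_le_mul' hmov le_rfl)
    _ ≤ SSs φ (i + h + j + l) := by
        rw [TTs]
        simp only [Submodule.iSup_mul, Submodule.mul_iSup]
        refine iSup₂_le fun s hs => ?_
        rw [Finset.mem_range, Nat.lt_succ_iff] at hs
        rw [mul_assoc (MAs φ (j + s)) (MCs φ (h - s)) (MCs φ l),
          ← mul_assoc (MAs φ i) (MAs φ (j + s)) (MCs φ (h - s) * MCs φ l),
          MAs_mul, MCs_mul]
        exact le_SSs φ (by omega)

lemma SSs_mul (hφ : ∀ (c : C) (a : A), φ c a * a⁻¹ ∈ gammaTwoTwo A) (m n : ℕ) :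
    SSs φ m * SSs φ n ≤ SSs φ (m + n) := by
  rw [SSs, SSs]
  simp only [Submodule.iSup_mul, Submodule.mul_iSup]
  refine iSup₂_le fun i hi => iSup₂_le fun j hj => ?_
  rw [Finset.mem_range, Nat.lt_succ_iff] at hi hj
  refine le_trans (MAMC_mul φ hφ j (m - j) i (n - i)) ?_
  rw [show j + (m - j) + i + (n - i) = m + n by omega]

lemma augIdeal_le_SSs : augIdeal (ZMod 2) (A ⋊[φ] C) ≤ SSs φ 1 := by
  refine le_trans augIdeal_le_span (Submodule.span_le.mpr ?_)
  rintro w ⟨b, rfl⟩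
  have key : MonoidAlgebra.of (ZMod 2) (A ⋊[φ] C) b - 1
      = iAh φ (MonoidAlgebra.of (ZMod 2) A b.left - 1)
          * iCh φ (MonoidAlgebra.of (ZMod 2) C b.right)
        + iAh φ 1 * iCh φ (MonoidAlgebra.of (ZMod 2) C b.right - 1) := by
    have e : MonoidAlgebra.of (ZMod 2) (A ⋊[φ] C) (SemidirectProduct.inl b.left)
          * MonoidAlgebra.of (ZMod 2) (A ⋊[φ] C) (SemidirectProduct.inr b.right)
        = MonoidAlgebra.of (ZMod 2) (A ⋊[φ] C) b := by
      rw [← map_mul, SemidirectProduct.inl_left_mul_inr_right]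
    rw [map_sub (iAh φ), map_one (iAh φ), map_sub (iCh φ), map_one (iCh φ),
      iAh_of, iCh_of, sub_mul]
    simp only [one_mul]
    rw [e]
    abel
  have hmem : MonoidAlgebra.of (ZMod 2) (A ⋊[φ] C) b - 1 ∈ SSs φ 1 := by
    rw [key]
    refine add_mem ?_ ?_
    · have h1 : MonoidAlgebra.of (ZMod 2) A b.left - 1 ∈ augPow (ZMod 2) A 1 := by
        rw [augPow_one]; exact of_sub_one_mem _
      have h2 : MonoidAlgebra.of (ZMod 2) C b.right ∈ augPow (ZMod 2) C 0 := by
        rw [augPow_zero]; exact Submodule.mem_top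
      exact le_SSs φ (by omega) (Submodule.mul_mem_mul (mem_MAs φ h1) (mem_MCs φ h2))
    · have h1 : (1 : MonoidAlgebra (ZMod 2) A) ∈ augPow (ZMod 2) A 0 := by
        rw [augPow_zero]; exact Submodule.mem_top
      have h2 : MonoidAlgebra.of (ZMod 2) C b.right - 1 ∈ augPow (ZMod 2) C 1 := by
        rw [augPow_one]; exact of_sub_one_mem _
      exact le_SSs φ (by omega) (Submodule.mul_mem_mul (mem_MAs φ h1) (mem_MCs φ h2))
  exact hmem

lemma top_le_SSs_zero : (⊤ : Submodule (ZMod 2) (MonoidAlgebra (ZMod 2) (A ⋊[φ] C))) ≤ SSs φ 0 := by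
  refine le_trans top_le_span_of (Submodule.span_le.mpr ?_)
  rintro w ⟨b, rfl⟩
  have key : MonoidAlgebra.of (ZMod 2) (A ⋊[φ] C) b
      = iAh φ (MonoidAlgebra.of (ZMod 2) A b.left)
        * iCh φ (MonoidAlgebra.of (ZMod 2) C b.right) := by
    rw [iAh_of, iCh_of, ← map_mul, SemidirectProduct.inl_left_mul_inr_right]
  have h1 : MonoidAlgebra.of (ZMod 2) A b.left ∈ augPow (ZMod 2) A 0 := by
    rw [augPow_zero]; exact Submodule.mem_top
  have h2 : MonoidAlgebra.of (ZMod 2) C b.right ∈ augPow (ZMod 2) C 0 := by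
    rw [augPow_zero]; exact Submodule.mem_top
  have hmem : MonoidAlgebra.of (ZMod 2) (A ⋊[φ] C) b ∈ SSs φ 0 := by
    rw [key]
    exact le_SSs φ (by omega) (Submodule.mul_mem_mul (mem_MAs φ h1) (mem_MCs φ h2))
  exact hmem

lemma SSs_le_augPow (m : ℕ) : SSs φ m ≤ augPow (ZMod 2) (A ⋊[φ] C) m := by
  rw [SSs]
  refine iSup₂_le fun i hi => ?_
  rw [Finset.mem_range, Nat.lt_succ_iff] at hi
  calc MAs φ i * MCs φ (m - i)
      ≤ augPow (ZMod 2) (A ⋊[φ] C) i * augPow (ZMod 2) (A ⋊[φ] C) (m - i) :=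
        mul_le_mul' (iota_map_augPow _ i) (iota_map_augPow _ (m - i))
    _ = augPow (ZMod 2) (A ⋊[φ] C) (i + (m - i)) := augPow_mul i (m - i)
    _ = augPow (ZMod 2) (A ⋊[φ] C) m := by rw [show i + (m - i) = m by omega]

lemma main_decomp (hφ : ∀ (c : C) (a : A), φ c a * a⁻¹ ∈ gammaTwoTwo A) (n : ℕ) :
    augPow (ZMod 2) (A ⋊[φ] C) n = SSs φ n := by
  induction n with
  | zero =>
    rw [augPow_zero]
    exact le_antisymm (top_le_SSs_zero φ) le_top
  | succ n IH =>
    refine le_antisymm ?_ (SSs_le_augPow φ (n + 1))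
    calc augPow (ZMod 2) (A ⋊[φ] C) (n + 1)
        = augPow (ZMod 2) (A ⋊[φ] C) n * augPow (ZMod 2) (A ⋊[φ] C) 1 := (augPow_mul n 1).symm
      _ ≤ SSs φ n * SSs φ 1 := by
          refine mul_le_mul' (le_of_eq IH) ?_
          rw [augPow_one]
          exact augIdeal_le_SSs φ
      _ ≤ SSs φ (n + 1) := SSs_mul φ hφ n 1

end SDP3


/-- For a `2`-almost direct product `B = A ⋊[φ] C`, the `k`-th power of the augmentation
ideal of `F₂[B]` decomposes as `Ī(B)^k = Σ_{i+h=k} ι_A(Ī(A)^i) · ι_C(Ī(C)^h)`. -/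
theorem statement5 {A C : Type*} [Group A] [Group C] (φ : C →* MulAut A)
    (hφ : ∀ (c : C) (a : A), φ c a * a⁻¹ ∈ gammaTwoTwo A) (k : ℕ) :
    augPow (ZMod 2) (A ⋊[φ] C) k =
      ⨆ i ∈ Finset.range (k + 1),
        (augPow (ZMod 2) A i).map (iotaHom (ZMod 2) (SemidirectProduct.inl)).toLinearMap *
        (augPow (ZMod 2) C (k - i)).map (iotaHom (ZMod 2) (SemidirectProduct.inr)).toLinearMap := by
  exact main_decomp φ hφ k
end

section
/- Let A and C be groups and φ : C → Aut(A) an action such that φ(c)(a)·a⁻¹ ∈ γ_2² A for every c ∈ C and a ∈ A (so that B = A ⋊_φ C is a 2-almost direct product). Then for every a ∈ A and c ∈ C, viewing a and c as elements of B, the element c·a − a·c of F₂[B] lies in ι_A(Ī(A)²)·c; that is, there exists x ∈ Ī(A)² with c·a − a·c = ι_A(x)·c in F₂[B]. -/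
open scoped commutatorElement

open MonoidAlgebra

lemma aug_mem {k : Type*} [CommRing k] {G : Type*} [Group G] (g : G) :
    of k G g - 1 ∈ augIdeal k G := by
  simp [augIdeal, LinearMap.mem_ker, map_sub, MonoidAlgebra.lift_of]

lemma aug_absorb_left {k : Type*} [CommRing k] {G : Type*} [Group G]
    {x : MonoidAlgebra k G} (b : MonoidAlgebra k G) (hx : x ∈ augIdeal k G) :
    b * x ∈ augIdeal k G := by
  simp only [augIdeal, LinearMap.mem_ker, AlgHom.toLinearMap_apply] at *
  simp [map_mul, hx]

lemma aug_absorb_right {k : Type*} [CommRing k] {G : Type*} [Group G]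
    {x : MonoidAlgebra k G} (b : MonoidAlgebra k G) (hx : x ∈ augIdeal k G) :
    x * b ∈ augIdeal k G := by
  simp only [augIdeal, LinearMap.mem_ker, AlgHom.toLinearMap_apply] at *
  simp [map_mul, hx]

lemma sq_absorb_left {k : Type*} [CommRing k] {G : Type*} [Group G]
    {x : MonoidAlgebra k G} (b : MonoidAlgebra k G) (hx : x ∈ (augIdeal k G) ^ 2) :
    b * x ∈ (augIdeal k G) ^ 2 := by
  rw [sq] at hx ⊢
  refine Submodule.mul_induction_on hx (fun m hm n hn => ?_) (fun u v hu hv => ?_)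
  · rw [← mul_assoc]; exact Submodule.mul_mem_mul (aug_absorb_left b hm) hn
  · rw [mul_add]; exact add_mem hu hv

lemma sq_absorb_right {k : Type*} [CommRing k] {G : Type*} [Group G]
    {x : MonoidAlgebra k G} (b : MonoidAlgebra k G) (hx : x ∈ (augIdeal k G) ^ 2) :
    x * b ∈ (augIdeal k G) ^ 2 := by
  rw [sq] at hx ⊢
  refine Submodule.mul_induction_on hx (fun m hm n hn => ?_) (fun u v hu hv => ?_)
  · rw [mul_assoc]; exact Submodule.mul_mem_mul hm (aug_absorb_right b hn)
  · rw [add_mul]; exact add_mem hu hv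

lemma add_self_eq_zero' {G : Type*} [Group G] (y : MonoidAlgebra (ZMod 2) G) :
    y + y = 0 := by
  have h2 : (2 : MonoidAlgebra (ZMod 2) G) = 0 := by
    have e : (2 : MonoidAlgebra (ZMod 2) G) = algebraMap (ZMod 2) _ (2 : ZMod 2) :=
      (map_ofNat (algebraMap (ZMod 2) (MonoidAlgebra (ZMod 2) G)) 2).symm
    rw [e, show (2 : ZMod 2) = 0 from rfl, map_zero]
  rw [← two_mul, h2, zero_mul]

lemma gamma_sub_one_mem {G : Type*} [Group G] {g : G} (hg : g ∈ gammaTwoTwo G) :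
    of (ZMod 2) G g - 1 ∈ (augIdeal (ZMod 2) G) ^ 2 := by
  induction hg using Subgroup.closure_induction with
  | mem x hx =>
    rcases hx with ⟨p, q, rfl⟩ | ⟨p, rfl⟩
    · have key : of (ZMod 2) G ⁅p, q⁆ - 1 =
          ((of (ZMod 2) G p - 1) * (of (ZMod 2) G q - 1) -
             (of (ZMod 2) G q - 1) * (of (ZMod 2) G p - 1)) * of (ZMod 2) G (q * p)⁻¹ := by
        have h1 : of (ZMod 2) G ⁅p, q⁆ =
            of (ZMod 2) G p * of (ZMod 2) G q * of (ZMod 2) G (q * p)⁻¹ := by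
          rw [← map_mul, ← map_mul, commutatorElement_def]; congr 1; group
        have h2 : (1 : MonoidAlgebra (ZMod 2) G) =
            of (ZMod 2) G q * of (ZMod 2) G p * of (ZMod 2) G (q * p)⁻¹ := by
          rw [← map_mul, ← map_mul, mul_inv_cancel, map_one]
        rw [h1]; nth_rewrite 1 [h2]; noncomm_ring
      rw [key]
      refine sq_absorb_right _ (sub_mem ?_ ?_) <;>
        · rw [sq]; exact Submodule.mul_mem_mul (aug_mem _) (aug_mem _)
    · have hneg : (1 : MonoidAlgebra (ZMod 2) G) = -1 :=
        eq_neg_of_add_eq_zero_left (add_self_eq_zero' 1)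
      have key : of (ZMod 2) G (p ^ 2) - 1 = (of (ZMod 2) G p - 1) ^ 2 := by
        rw [map_pow]
        have e1 : (of (ZMod 2) G p - 1) ^ 2 =
            of (ZMod 2) G p ^ 2 - (of (ZMod 2) G p + of (ZMod 2) G p) + 1 := by noncomm_ring
        rw [e1, add_self_eq_zero', sub_zero, sub_eq_add_neg, ← hneg]
      rw [key]
      exact Submodule.pow_mem_pow _ (aug_mem p) 2
  | one => rw [map_one, sub_self]; exact zero_mem _
  | mul x y hx hy ihx ihy =>
    have key : of (ZMod 2) G (x * y) - 1 =
        (of (ZMod 2) G x - 1) * (of (ZMod 2) G y - 1) + (of (ZMod 2) G x - 1) +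
          (of (ZMod 2) G y - 1) := by
      rw [map_mul]; noncomm_ring
    rw [key]
    exact add_mem (add_mem (by rw [sq]; exact Submodule.mul_mem_mul (aug_mem x) (aug_mem y)) ihx) ihy
  | inv x hx ih =>
    have key : of (ZMod 2) G x⁻¹ - 1 = -(of (ZMod 2) G x⁻¹ * (of (ZMod 2) G x - 1)) := by
      rw [mul_sub, ← map_mul, inv_mul_cancel, map_one, mul_one]; noncomm_ring
    rw [key]
    exact neg_mem (sq_absorb_left _ ih)

/-- In a `2`-almost direct product `B = A ⋊[φ] C`, for `a ∈ A` and `c ∈ C` one has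
`c·a - a·c = ι_A(x)·c` in `F₂[B]` for some `x ∈ Ī(A)²`. -/
theorem statement8 {A C : Type*} [Group A] [Group C] (φ : C →* MulAut A)
    (hφ : ∀ (c : C) (a : A), φ c a * a⁻¹ ∈ gammaTwoTwo A)
    (a : A) (c : C) :
    ∃ x ∈ (augIdeal (ZMod 2) A) ^ 2,
      MonoidAlgebra.of (ZMod 2) (A ⋊[φ] C) (SemidirectProduct.inr c) *
          MonoidAlgebra.of (ZMod 2) (A ⋊[φ] C) (SemidirectProduct.inl a) -
        MonoidAlgebra.of (ZMod 2) (A ⋊[φ] C) (SemidirectProduct.inl a) *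
          MonoidAlgebra.of (ZMod 2) (A ⋊[φ] C) (SemidirectProduct.inr c) =
      iotaHom (ZMod 2) (SemidirectProduct.inl) x *
        MonoidAlgebra.of (ZMod 2) (A ⋊[φ] C) (SemidirectProduct.inr c) := by
  refine ⟨(of (ZMod 2) A (φ c a * a⁻¹) - 1) * of (ZMod 2) A a,
    sq_absorb_right _ (gamma_sub_one_mem (hφ c a)), ?_⟩
  have hiota : ∀ z : A,
      iotaHom (ZMod 2) (SemidirectProduct.inl (φ := φ)) (of (ZMod 2) A z) =
        of (ZMod 2) (A ⋊[φ] C) (SemidirectProduct.inl z) := fun z => by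
    simp [iotaHom, MonoidAlgebra.lift_of]
  rw [map_mul, map_sub, map_one, hiota, hiota, sub_mul, one_mul, sub_mul,
    ← map_mul, ← map_mul, ← map_mul, ← map_mul]
  congr 2
  rw [← map_mul, inv_mul_cancel_right, SemidirectProduct.inl_aut, map_inv, inv_mul_cancel_right]
end

section
/- The fundamental group of the Klein bottle, i.e. the group with presentation ⟨a, b | a b a⁻¹ = b⁻¹⟩, equivalently the semidirect product ℤ ⋊ ℤ in which the generator of the acting copy of ℤ acts on ℤ by negation, is residually 2-finite. -/
/-- The action of `ℤ` on `ℤ` in which the generator acts by negation (written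
multiplicatively: the generator of `Multiplicative ℤ` acts by inversion). -/
def kleinAction : Multiplicative ℤ →* MulAut (Multiplicative ℤ) :=
  zpowersHom (MulAut (Multiplicative ℤ)) (MulEquiv.inv (Multiplicative ℤ))

section Aux

lemma klein_inv_sq (M : Type*) [CommGroup M] : (MulEquiv.inv M) ^ 2 = 1 := by
  ext x
  simp [pow_two]

/-- The action of `Multiplicative (ZMod 2)` on a commutative group by inversion. -/
def kleinMod2Act (M : Type*) [CommGroup M] : Multiplicative (ZMod 2) →* MulAut M where
  toFun x := (MulEquiv.inv M) ^ (Multiplicative.toAdd x).val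
  map_one' := by
    show (MulEquiv.inv M) ^ (0 : ZMod 2).val = 1
    simp
  map_mul' x y := by
    show (MulEquiv.inv M) ^ (Multiplicative.toAdd x + Multiplicative.toAdd y).val
      = (MulEquiv.inv M) ^ (Multiplicative.toAdd x).val * (MulEquiv.inv M) ^ (Multiplicative.toAdd y).val
    rw [ZMod.val_add, ← pow_eq_pow_mod _ (klein_inv_sq M), pow_add]

/-- Reduction mod `n`, as a `MonoidHom` of multiplicative integers. -/
def kleinRed (n : ℕ) : Multiplicative ℤ →* Multiplicative (ZMod n) :=
  AddMonoidHom.toMultiplicative (Int.castAddHom (ZMod n))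

lemma kleinRed_apply (n : ℕ) (x : Multiplicative ℤ) :
    Multiplicative.toAdd (kleinRed n x) = ((Multiplicative.toAdd x : ℤ) : ZMod n) := rfl

lemma kleinAction_apply (a b : Multiplicative ℤ) :
    kleinAction a b = ((MulEquiv.inv (Multiplicative ℤ)) ^ (Multiplicative.toAdd a)) b := rfl

/-- The dihedral-type finite quotient. -/
abbrev KleinTarget (k : ℕ) : Type :=
  Multiplicative (ZMod (2 ^ k)) ⋊[kleinMod2Act (Multiplicative (ZMod (2 ^ k)))] Multiplicative (ZMod 2)

lemma klein_compat (k : ℕ) : ∀ g : Multiplicative ℤ,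
    ((SemidirectProduct.inl.comp (kleinRed (2 ^ k)) : Multiplicative ℤ →* KleinTarget k)).comp
        (kleinAction g).toMonoidHom
      = (MulAut.conj ((SemidirectProduct.inr.comp (kleinRed 2)) g)).toMonoidHom.comp
          (SemidirectProduct.inl.comp (kleinRed (2 ^ k))) := by
  intro a
  refine MonoidHom.ext fun b => ?_
  show SemidirectProduct.inl (kleinRed (2 ^ k) (kleinAction a b))
      = MulAut.conj (SemidirectProduct.inr (kleinRed 2 a)) (SemidirectProduct.inl (kleinRed (2 ^ k) b))
  rw [MulAut.conj_apply, ← map_inv SemidirectProduct.inr, ← SemidirectProduct.inl_aut]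
  congr 1
  show kleinRed (2 ^ k) (kleinAction a b)
      = kleinMod2Act (Multiplicative (ZMod (2 ^ k))) (kleinRed 2 a) (kleinRed (2 ^ k) b)
  rw [kleinAction_apply]
  set n : ℤ := Multiplicative.toAdd a with hn
  have h2 : (MulEquiv.inv (Multiplicative ℤ)) ^ (2 : ℤ) = 1 := by
    rw [zpow_two, ← pow_two, klein_inv_sq]
  rw [zpow_eq_zpow_emod n h2]
  have hact : kleinMod2Act (Multiplicative (ZMod (2 ^ k))) (kleinRed 2 a)
      = (MulEquiv.inv (Multiplicative (ZMod (2 ^ k)))) ^ ((n : ZMod 2).val) := rfl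
  rcases Int.even_or_odd n with he | ho
  · have h0 : n % 2 = 0 := Int.emod_eq_zero_of_dvd he.two_dvd
    rw [h0, hact]
    have : ((n : ZMod 2)) = 0 := by
      rw [ZMod.intCast_zmod_eq_zero_iff_dvd]
      exact_mod_cast he.two_dvd
    rw [this]
    simp
  · have h1 : n % 2 = 1 := Int.odd_iff.mp ho
    rw [h1, hact]
    have : ((n : ZMod 2)) = 1 := by
      have : ((n : ZMod 2)) = ((1 : ℤ) : ZMod 2) :=
        (ZMod.intCast_eq_intCast_iff _ _ _).mpr (show n % 2 = 1 % 2 by omega)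
      simpa using this
    rw [this]
    have hv : (1 : ZMod 2).val = 1 := rfl
    rw [hv, pow_one, zpow_one]
    simp

lemma klein_exists_pow (m : ℤ) (hm : m ≠ 0) : ∃ k : ℕ, ¬ ((2 : ℤ) ^ k ∣ m) := by
  refine ⟨m.natAbs, fun hdvd => ?_⟩
  have h1 : (2 : ℤ) ^ m.natAbs ≤ |m| := Int.le_of_dvd (abs_pos.mpr hm) ((dvd_abs _ _).mpr hdvd)
  have h2 : |m| = (m.natAbs : ℤ) := Int.abs_eq_natAbs m
  have h3 : (m.natAbs : ℤ) < 2 ^ m.natAbs := by exact_mod_cast Nat.lt_two_pow_self (n := m.natAbs)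
  omega

end Aux

/-- The fundamental group of the Klein bottle, `⟨a, b | a b a⁻¹ = b⁻¹⟩ ≅ ℤ ⋊ ℤ` with the
generator of the acting `ℤ` acting by negation, is residually 2-finite. -/
theorem statement9 :
    IsResiduallyPFinite 2 (Multiplicative ℤ ⋊[kleinAction] Multiplicative ℤ) := by
  rintro ⟨b, a⟩ hg
  by_cases hb : b = 1
  · -- detect `a` via the projection to the second factor
    subst hb
    have ha : Multiplicative.toAdd a ≠ 0 := by
      intro h
      apply hg
      ext <;> simp_all
    obtain ⟨k, hk⟩ := klein_exists_pow (Multiplicative.toAdd a) ha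
    have : NeZero (2 ^ k) := ⟨by positivity⟩
    refine ⟨Multiplicative (ZMod (2 ^ k)), inferInstance, inferInstance,
      (kleinRed (2 ^ k)).comp SemidirectProduct.rightHom, ?_, ?_⟩
    · exact IsPGroup.of_card (n := k) (by simp [Nat.card_eq_fintype_card])
    · intro h
      apply hk
      have h0 : ((Multiplicative.toAdd a : ℤ) : ZMod (2 ^ k)) = 0 := by
        have := congrArg Multiplicative.toAdd h
        simpa [kleinRed_apply, SemidirectProduct.rightHom] using this
      exact_mod_cast (ZMod.intCast_zmod_eq_zero_iff_dvd _ (2 ^ k)).mp h0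
  · -- detect `b` via the dihedral quotient
    have hbz : Multiplicative.toAdd b ≠ 0 := fun h => hb (by
      have : b = Multiplicative.ofAdd 0 := by simp [← h]
      simpa using this)
    obtain ⟨k, hk⟩ := klein_exists_pow (Multiplicative.toAdd b) hbz
    have : NeZero (2 ^ k) := ⟨by positivity⟩
    have hfin : Finite (KleinTarget k) :=
      Finite.of_equiv (Multiplicative (ZMod (2 ^ k)) × Multiplicative (ZMod 2))
        ⟨fun p => ⟨p.1, p.2⟩, fun x => (x.1, x.2), fun _ => rfl, fun _ => rfl⟩
    refine ⟨KleinTarget k, inferInstance, hfin,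
      SemidirectProduct.lift _ _ (klein_compat k), ?_, ?_⟩
    · refine IsPGroup.of_card (n := k + 1) ?_
      have hcard : Nat.card (KleinTarget k)
          = Nat.card (Multiplicative (ZMod (2 ^ k)) × Multiplicative (ZMod 2)) :=
        Nat.card_congr ⟨fun x => (x.1, x.2), fun p => ⟨p.1, p.2⟩, fun _ => rfl, fun _ => rfl⟩
      rw [hcard]
      have : Nat.card (Multiplicative (ZMod (2 ^ k)) × Multiplicative (ZMod 2))
          = 2 ^ k * 2 := by
        simp [Nat.card_eq_fintype_card]
      rw [this, ← pow_succ]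
    · intro h
      have hleft := congrArg SemidirectProduct.left h
      simp only [SemidirectProduct.lift, MonoidHom.coe_mk, OneHom.coe_mk,
        SemidirectProduct.mul_left, MonoidHom.comp_apply, SemidirectProduct.left_inl,
        SemidirectProduct.left_inr, map_one, mul_one, SemidirectProduct.one_left] at hleft
      apply hk
      have h0 : ((Multiplicative.toAdd b : ℤ) : ZMod (2 ^ k)) = 0 := by
        have := congrArg Multiplicative.toAdd hleft
        simpa [kleinRed_apply] using this
      exact_mod_cast (ZMod.intCast_zmod_eq_zero_iff_dvd _ (2 ^ k)).mp h0
end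

section
/- Fix integers n ≥ 1 and g ≥ 2. Let G be a group with elements B_{i,j} (1 ≤ i < j ≤ n) and ρ_{k,l} (1 ≤ k ≤ n, 1 ≤ l ≤ g) satisfying: (b₁): ρ_{i,k} ρ_{j,l} ρ_{i,k}⁻¹ = ρ_{j,l} for all 1 ≤ i < j ≤ n and 1 ≤ k < l ≤ g; (d₁): ρ_{k,l} B_{i,j} ρ_{k,l}⁻¹ = B_{i,j} for all 1 ≤ i < j ≤ n, 1 ≤ l ≤ g and all k with k < i or j < k; and (e): ρ_{i,k}⁻¹ ρ_{j,k} ρ_{i,k} ρ_{j,k}⁻¹ = B_{i,j}⁻¹ for all 1 ≤ i < j ≤ n and 1 ≤ k ≤ g. Set a_k = ρ_{k,g−1} ρ_{k,g}, U = a_n a_{n−1} ⋯ a_2 and T_1 = B_{1,2} B_{1,3} ⋯ B_{1,n}. Then ρ_{1,g−1}⁻¹ U ρ_{1,g−1} = T_1⁻¹ U. -/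
private lemma Tinv_aux {G : Type*} [Group G] (B : ℕ → G) :
    ∀ m : ℕ, (((List.range m).map fun i => B (i + 2)).prod)⁻¹
      = ((List.range m).map fun i => (B (m + 1 - i))⁻¹).prod := by
  intro m
  induction m with
  | zero => simp
  | succ m ih =>
    conv_rhs => rw [List.range_succ_eq_map]
    rw [List.range_succ, List.map_append, List.prod_append, mul_inv_rev, ih]
    simp only [List.map_cons, List.map_map, List.prod_cons, List.map_singleton,
      List.prod_singleton, Nat.sub_zero]
    congr 1
    · norm_num
    congr 1
    apply List.map_congr_left
    intro i hi
    simp only [Function.comp]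
    congr 2
    simp only [List.mem_range] at hi
    omega

/-- Relation (f₂): in a group with elements `B i j` (`1 ≤ i < j ≤ n`) and `ρ k l`
(`1 ≤ k ≤ n`, `1 ≤ l ≤ g`) satisfying relations (b₁), (d₁) and (e), one has
`ρ_{1,g-1}⁻¹ U ρ_{1,g-1} = T₁⁻¹ U`, where `aₖ = ρ_{k,g-1} ρ_{k,g}`,
`U = aₙ a_{n-1} ⋯ a₂` and `T₁ = B_{1,2} B_{1,3} ⋯ B_{1,n}`. -/
theorem statement11 {G : Type*} [Group G] (n g : ℕ) (hn : 1 ≤ n) (hg : 2 ≤ g)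
    (B : ℕ → ℕ → G) (ρ : ℕ → ℕ → G)
    (hb1 : ∀ i j k l, 1 ≤ i → i < j → j ≤ n → 1 ≤ k → k < l → l ≤ g →
      ρ i k * ρ j l * (ρ i k)⁻¹ = ρ j l)
    (hd1 : ∀ i j k l, 1 ≤ i → i < j → j ≤ n → 1 ≤ k → k ≤ n → 1 ≤ l → l ≤ g →
      (k < i ∨ j < k) → ρ k l * B i j * (ρ k l)⁻¹ = B i j)
    (he : ∀ i j k, 1 ≤ i → i < j → j ≤ n → 1 ≤ k → k ≤ g →
      (ρ i k)⁻¹ * ρ j k * ρ i k * (ρ j k)⁻¹ = (B i j)⁻¹)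
    (a : ℕ → G) (ha : ∀ k, a k = ρ k (g - 1) * ρ k g)
    (U : G) (hU : U = (((List.range (n - 1)).map fun i => a (n - i)).prod))
    (T : G) (hT : T = (((List.range (n - 1)).map fun i => B 1 (i + 2)).prod)) :
    (ρ 1 (g - 1))⁻¹ * U * ρ 1 (g - 1) = T⁻¹ * U := by
  set r := ρ 1 (g - 1) with hr
  -- conjugation of a k by r
  have hconj_a : ∀ k, 2 ≤ k → k ≤ n → r⁻¹ * a k * r = (B 1 k)⁻¹ * a k := by
    intro k hk2 hkn
    have h1 := he 1 k (g - 1) le_rfl (by omega) hkn (by omega) (by omega)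
    have h2 := hb1 1 k (g - 1) g le_rfl (by omega) hkn (by omega) (by omega) le_rfl
    have h1' : r⁻¹ * ρ k (g - 1) * r = (B 1 k)⁻¹ * ρ k (g - 1) := by
      rw [← h1, hr]; group
    have h2' : r⁻¹ * ρ k g * r = ρ k g := by
      rw [hr] at *
      calc (ρ 1 (g-1))⁻¹ * ρ k g * ρ 1 (g-1)
          = (ρ 1 (g-1))⁻¹ * (ρ 1 (g-1) * ρ k g * (ρ 1 (g-1))⁻¹) * ρ 1 (g-1) := by rw [h2]
        _ = ρ k g := by group
    rw [ha]
    calc r⁻¹ * (ρ k (g-1) * ρ k g) * r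
        = (r⁻¹ * ρ k (g-1) * r) * (r⁻¹ * ρ k g * r) := by group
      _ = (B 1 k)⁻¹ * ρ k (g-1) * ρ k g := by rw [h1', h2', mul_assoc]
      _ = (B 1 k)⁻¹ * (ρ k (g-1) * ρ k g) := by rw [mul_assoc]
  -- commutation of B 1 j with a k for j < k
  have hcomm : ∀ j k, 2 ≤ j → j < k → k ≤ n → Commute ((B 1 j)⁻¹) (a k) := by
    intro j k hj2 hjk hkn
    have c1 : Commute (B 1 j) (ρ k (g - 1)) := by
      have := hd1 1 j k (g - 1) le_rfl (by omega) (by omega) (by omega) hkn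
        (by omega) (by omega) (Or.inr hjk)
      exact (mul_inv_eq_iff_eq_mul.mp this).symm
    have c2 : Commute (B 1 j) (ρ k g) := by
      have := hd1 1 j k g le_rfl (by omega) (by omega) (by omega) hkn
        (by omega) le_rfl (Or.inr hjk)
      exact (mul_inv_eq_iff_eq_mul.mp this).symm
    rw [ha]
    exact (c1.mul_right c2).inv_left
  -- key induction
  have key : ∀ m, m ≤ n - 1 →
      r⁻¹ * (((List.range m).map fun i => a (n - i)).prod) * r
        = (((List.range m).map fun i => (B 1 (n - i))⁻¹).prod)
          * (((List.range m).map fun i => a (n - i)).prod) := by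
    intro m
    induction m with
    | zero => intro _; simp
    | succ m ih =>
      intro hm
      have hm' : m ≤ n - 1 := by omega
      have ihm := ih hm'
      rw [List.range_succ, List.map_append, List.prod_append, List.map_append,
        List.prod_append, List.map_singleton, List.prod_singleton,
        List.map_singleton, List.prod_singleton]
      set Pm := ((List.range m).map fun i => a (n - i)).prod with hPm
      set Lm := ((List.range m).map fun i => (B 1 (n - i))⁻¹).prod with hLm
      have hA := hconj_a (n - m) (by omega) (by omega)
      have hC : Commute ((B 1 (n - m))⁻¹) Pm := by
        apply Commute.list_prod_right
        intro x hx
        rw [List.mem_map] at hx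
        obtain ⟨i, hi, rfl⟩ := hx
        rw [List.mem_range] at hi
        exact hcomm (n - m) (n - i) (by omega) (by omega) (by omega)
      calc r⁻¹ * (Pm * a (n - m)) * r
          = (r⁻¹ * Pm * r) * (r⁻¹ * a (n - m) * r) := by group
        _ = (Lm * Pm) * ((B 1 (n - m))⁻¹ * a (n - m)) := by rw [ihm, hA]
        _ = Lm * (Pm * (B 1 (n - m))⁻¹) * a (n - m) := by group
        _ = Lm * ((B 1 (n - m))⁻¹ * Pm) * a (n - m) := by rw [hC.eq]
        _ = Lm * (B 1 (n - m))⁻¹ * (Pm * a (n - m)) := by group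
  have hTinv : T⁻¹ = ((List.range (n - 1)).map fun i => (B 1 (n - i))⁻¹).prod := by
    rw [hT, Tinv_aux (fun j => B 1 j) (n - 1)]
    congr 1
    apply List.map_congr_left
    intro i _
    congr 2
    omega
  rw [hU, hTinv]
  exact key (n - 1) le_rfl
end

section
/- Fix integers n ≥ 1 and g ≥ 2. Let G be a group with elements B_{i,j} (1 ≤ i < j ≤ n) and ρ_{k,l} (1 ≤ k ≤ n, 1 ≤ l ≤ g) satisfying: (b₁): ρ_{i,k} ρ_{j,l} ρ_{i,k}⁻¹ = ρ_{j,l} for all 1 ≤ i < j ≤ n and 1 ≤ k < l ≤ g; and (d₂): ρ_{i,l} B_{i,j} ρ_{i,l}⁻¹ = ρ_{j,l}⁻¹ B_{i,j}⁻¹ ρ_{j,l} for all 1 ≤ i < j ≤ n and 1 ≤ l ≤ g. Set a_k = ρ_{k,g−1} ρ_{k,g}. Then for all 1 ≤ j < k ≤ n one has a_j B_{j,k} a_j⁻¹ = a_k⁻¹ B_{j,k} a_k. -/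
/-- In a group with elements `B i j` (`1 ≤ i < j ≤ n`) and `ρ k l` (`1 ≤ k ≤ n`,
`1 ≤ l ≤ g`) satisfying relations (b₁) and (d₂), one has
`aⱼ B_{j,k} aⱼ⁻¹ = aₖ⁻¹ B_{j,k} aₖ` for all `1 ≤ j < k ≤ n`, where
`aₘ = ρ_{m,g-1} ρ_{m,g}`. -/
theorem statement12 {G : Type*} [Group G] (n g : ℕ) (hn : 1 ≤ n) (hg : 2 ≤ g)
    (B : ℕ → ℕ → G) (ρ : ℕ → ℕ → G)
    (hb1 : ∀ i j k l, 1 ≤ i → i < j → j ≤ n → 1 ≤ k → k < l → l ≤ g →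
      ρ i k * ρ j l * (ρ i k)⁻¹ = ρ j l)
    (hd2 : ∀ i j l, 1 ≤ i → i < j → j ≤ n → 1 ≤ l → l ≤ g →
      ρ i l * B i j * (ρ i l)⁻¹ = (ρ j l)⁻¹ * (B i j)⁻¹ * ρ j l)
    (a : ℕ → G) (ha : ∀ k, a k = ρ k (g - 1) * ρ k g) :
    ∀ j k, 1 ≤ j → j < k → k ≤ n →
      a j * B j k * (a j)⁻¹ = (a k)⁻¹ * B j k * a k := by
  intro j k hj hjk hkn
  have hg1 : 1 ≤ g - 1 := by omega
  have hg2 : g - 1 < g := by omega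
  have h1 := hd2 j k g hj hjk hkn (by omega) le_rfl
  have h2 := hd2 j k (g - 1) hj hjk hkn hg1 (by omega)
  have h3 := hb1 j k (g - 1) g hj hjk hkn hg1 hg2 le_rfl
  rw [ha, ha]
  set x := ρ j (g - 1); set y := ρ j g; set u := ρ k (g - 1); set v := ρ k g
  set b := B j k
  have h2' : x * b⁻¹ * x⁻¹ = u⁻¹ * b * u := by
    have : x * b⁻¹ * x⁻¹ = (x * b * x⁻¹)⁻¹ := by group
    rw [this, h2]; group
  calc x * y * b * (x * y)⁻¹
      = x * (y * b * y⁻¹) * x⁻¹ := by group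
    _ = x * (v⁻¹ * b⁻¹ * v) * x⁻¹ := by rw [h1]
    _ = (x * v * x⁻¹)⁻¹ * (x * b⁻¹ * x⁻¹) * (x * v * x⁻¹) := by group
    _ = v⁻¹ * (u⁻¹ * b * u) * v := by rw [h3, h2']
    _ = (u * v)⁻¹ * b * (u * v) := by group
end

section
/- Fix integers n ≥ 1 and g ≥ 2. Let G be a group with elements B_{i,j} (1 ≤ i < j ≤ n) and ρ_{k,l} (1 ≤ k ≤ n, 1 ≤ l ≤ g) satisfying: (b₁): ρ_{i,k} ρ_{j,l} ρ_{i,k}⁻¹ = ρ_{j,l} for all 1 ≤ i < j ≤ n and 1 ≤ k < l ≤ g; (d₁): ρ_{k,l} B_{i,j} ρ_{k,l}⁻¹ = B_{i,j} for all 1 ≤ i < j ≤ n, 1 ≤ l ≤ g and all k with k < i or j < k; (d₂): ρ_{i,l} B_{i,j} ρ_{i,l}⁻¹ = ρ_{j,l}⁻¹ B_{i,j}⁻¹ ρ_{j,l} for all 1 ≤ i < j ≤ n and 1 ≤ l ≤ g; and (g): a_k a_j a_k⁻¹ commutes with B_{i,k} for all 1 ≤ i < j < k ≤ n, where a_k =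 ρ_{k,g−1} ρ_{k,g}. Then the product a_n a_{n−1} ⋯ a_1 commutes with B_{j,k} for all 1 ≤ j < k ≤ n. -/
/-- Relation (h): in a group with elements `B i j` (`1 ≤ i < j ≤ n`) and `ρ k l`
(`1 ≤ k ≤ n`, `1 ≤ l ≤ g`) satisfying relations (b₁), (d₁), (d₂) and (g), the product
`aₙ a_{n-1} ⋯ a₁` (where `aₖ = ρ_{k,g-1} ρ_{k,g}`) commutes with `B_{j,k}` for all
`1 ≤ j < k ≤ n`. -/
theorem statement13 {G : Type*} [Group G] (n g : ℕ) (hn : 1 ≤ n) (hg : 2 ≤ g)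
    (B : ℕ → ℕ → G) (ρ : ℕ → ℕ → G)
    (hb1 : ∀ i j k l, 1 ≤ i → i < j → j ≤ n → 1 ≤ k → k < l → l ≤ g →
      ρ i k * ρ j l * (ρ i k)⁻¹ = ρ j l)
    (hd1 : ∀ i j k l, 1 ≤ i → i < j → j ≤ n → 1 ≤ k → k ≤ n → 1 ≤ l → l ≤ g →
      (k < i ∨ j < k) → ρ k l * B i j * (ρ k l)⁻¹ = B i j)
    (hd2 : ∀ i j l, 1 ≤ i → i < j → j ≤ n → 1 ≤ l → l ≤ g →
      ρ i l * B i j * (ρ i l)⁻¹ = (ρ j l)⁻¹ * (B i j)⁻¹ * ρ j l)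
    (a : ℕ → G) (ha : ∀ k, a k = ρ k (g - 1) * ρ k g)
    (hcg : ∀ i j k, 1 ≤ i → i < j → j < k → k ≤ n →
      (a k * a j * (a k)⁻¹) * B i k = B i k * (a k * a j * (a k)⁻¹)) :
    ∀ j k, 1 ≤ j → j < k → k ≤ n →
      (((List.range n).map fun i => a (n - i)).prod) * B j k =
        B j k * (((List.range n).map fun i => a (n - i)).prod) := by
  intro j k hj hjk hkn
  have hg1 : 1 ≤ g - 1 := by omega
  have hgg : g - 1 < g := by omega
  set b := B j k with hb
  -- Fact 1: a m commutes with B j k when m < j or k < m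
  have f1 : ∀ m, 1 ≤ m → m ≤ n → (m < j ∨ k < m) → a m * b * (a m)⁻¹ = b := by
    intro m h1 h2 h3
    have e1 := hd1 j k m g hj hjk hkn h1 h2 (by omega) le_rfl h3
    have e2 := hd1 j k m (g-1) hj hjk hkn h1 h2 hg1 (by omega) h3
    rw [ha m]
    calc ρ m (g-1) * ρ m g * b * (ρ m (g-1) * ρ m g)⁻¹
        = ρ m (g-1) * (ρ m g * b * (ρ m g)⁻¹) * (ρ m (g-1))⁻¹ := by group
      _ = b := by rw [e1, e2]
  -- Fact 2: conjugation by a j turns b into (a k)⁻¹ * b * a k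
  have f2 : a j * b * (a j)⁻¹ = (a k)⁻¹ * b * a k := by
    have e1 := hd2 j k g hj hjk hkn (by omega) le_rfl
    have e2 := hd2 j k (g-1) hj hjk hkn hg1 (by omega)
    have e3 := hb1 j k (g-1) g hj hjk hkn hg1 hgg le_rfl
    rw [ha j, ha k]
    calc ρ j (g-1) * ρ j g * b * (ρ j (g-1) * ρ j g)⁻¹
        = ρ j (g-1) * (ρ j g * b * (ρ j g)⁻¹) * (ρ j (g-1))⁻¹ := by group
      _ = ρ j (g-1) * ((ρ k g)⁻¹ * b⁻¹ * ρ k g) * (ρ j (g-1))⁻¹ := by rw [e1]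
      _ = (ρ j (g-1) * ρ k g * (ρ j (g-1))⁻¹)⁻¹ *
            (ρ j (g-1) * b * (ρ j (g-1))⁻¹)⁻¹ *
            (ρ j (g-1) * ρ k g * (ρ j (g-1))⁻¹) := by group
      _ = (ρ k g)⁻¹ * ((ρ k (g-1))⁻¹ * b⁻¹ * ρ k (g-1))⁻¹ * ρ k g := by rw [e2, e3]
      _ = (ρ k (g-1) * ρ k g)⁻¹ * b * (ρ k (g-1) * ρ k g) := by group
  -- Fact 3: a m commutes with (a k)⁻¹ * b * a k for j < m < k
  have f3 : ∀ m, j < m → m < k →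
      a m * ((a k)⁻¹ * b * a k) * (a m)⁻¹ = (a k)⁻¹ * b * a k := by
    intro m h1 h2
    have H := hcg j m k hj h1 h2 hkn
    calc a m * ((a k)⁻¹ * b * a k) * (a m)⁻¹
        = (a k)⁻¹ * ((a k * a m * (a k)⁻¹) * b) * (a k * a m * (a k)⁻¹)⁻¹ * a k := by
          group
      _ = (a k)⁻¹ * (b * (a k * a m * (a k)⁻¹)) * (a k * a m * (a k)⁻¹)⁻¹ * a k := by
          rw [H]
      _ = (a k)⁻¹ * b * a k := by group
  -- Partial products
  set Q : ℕ → G := fun m => ((List.range m).map fun i => a (m - i)).prod with hQdef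
  have hQ : ∀ m, Q (m+1) = a (m+1) * Q m := by
    intro m
    simp only [hQdef, List.range_succ_eq_map, List.map_cons, List.map_map,
      List.prod_cons, Nat.sub_zero]
    simp [Function.comp_def, Nat.succ_sub_succ]
  -- main induction
  have main : ∀ m, m ≤ n →
      Q m * b * (Q m)⁻¹ =
        if m < j then b else if m < k then (a k)⁻¹ * b * a k else b := by
    intro m
    induction m with
    | zero =>
        intro _
        have : (0:ℕ) < j := hj
        simp [hQdef, this]
    | succ m ih =>
        intro hm
        have ihm := ih (by omega)
        have key : Q (m+1) * b * (Q (m+1))⁻¹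
            = a (m+1) * (Q m * b * (Q m)⁻¹) * (a (m+1))⁻¹ := by
          rw [hQ m]; group
        by_cases h1 : m + 1 < j
        · rw [if_pos (by omega : m < j)] at ihm
          rw [key, ihm, f1 (m+1) (by omega) hm (Or.inl h1), if_pos h1]
        · by_cases h2 : m + 1 = j
          · rw [if_pos (by omega : m < j)] at ihm
            rw [key, ihm, h2, f2, if_neg (by omega), if_pos (by omega)]
          · by_cases h3 : m + 1 < k
            · rw [if_neg (by omega : ¬ m < j), if_pos (by omega : m < k)] at ihm
              rw [key, ihm, f3 (m+1) (by omega) h3, if_neg h1, if_pos h3]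
            · by_cases h4 : m + 1 = k
              · rw [if_neg (by omega : ¬ m < j), if_pos (by omega : m < k)] at ihm
                rw [key, ihm, h4, if_neg (by omega : ¬ k < j), if_neg (lt_irrefl k)]
                group
              · rw [if_neg (by omega : ¬ m < j), if_neg (by omega : ¬ m < k)] at ihm
                rw [key, ihm, f1 (m+1) (by omega) hm (Or.inr (by omega)),
                  if_neg h1, if_neg h3]
  have hfin := main n le_rfl
  rw [if_neg (by omega), if_neg (by omega)] at hfin
  show Q n * b = b * Q n
  exact mul_inv_eq_iff_eq_mul.mp hfin
end

section
/- Let g ≥ 3 and let G be a group with elements ρ_1, …, ρ_g, U and T satisfying: (i) U ρ_l = ρ_l U for all 1 ≤ l ≤ g−2; (ii) ρ_{g−1}⁻¹ U ρ_{g−1} = T⁻¹ U; (iii) (U ρ_{g−1} ρ_g) T = T (U ρ_{g−1} ρ_g); and (iv) ρ_1² ρ_2² ⋯ ρ_g² = T. Then ρ_1² ⋯ ρ_{g−3}² · (ρ_{g−2} U⁻¹)² · (U ρ_{g−1})² · (ρ_g T⁻¹)² = 1, where the product ρ_1² ⋯ ρ_{g−3}² is understood to be 1 when g = 3. -/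
private lemma statement15_aux {G : Type*} [Group G] (P a b c U T : G)
    (h1 : U * a = a * U) (h2 : b⁻¹ * U * b = T⁻¹ * U)
    (h3 : (U * b * c) * T = T * (U * b * c))
    (h4 : P * a ^ 2 * b ^ 2 * c ^ 2 = T) :
    P * (a * U⁻¹) ^ 2 * (U * b) ^ 2 * (c * T⁻¹) ^ 2 = 1 := by
  have hau : U⁻¹ * a = a * U⁻¹ := by
    calc U⁻¹ * a = U⁻¹ * (a * U) * U⁻¹ := by group
    _ = U⁻¹ * (U * a) * U⁻¹ := by rw [← h1]
    _ = a * U⁻¹ := by group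
  have hbU : b * (T⁻¹ * U) = U * b := by rw [← h2]; group
  have hA : (U * b * c) * T⁻¹ = T⁻¹ * (U * b * c) := by
    calc (U * b * c) * T⁻¹ = T⁻¹ * (T * (U * b * c)) * T⁻¹ := by group
    _ = T⁻¹ * ((U * b * c) * T) * T⁻¹ := by rw [← h3]
    _ = T⁻¹ * (U * b * c) := by group
  calc P * (a * U⁻¹) ^ 2 * (U * b) ^ 2 * (c * T⁻¹) ^ 2
      = P * (a * ((U⁻¹ * a) * (U⁻¹ * (U * (b * (((U * b * c) * T⁻¹) * (c * T⁻¹))))))) := by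
        simp only [pow_two]; group
    _ = P * (a * ((a * U⁻¹) * (U⁻¹ * (U * (b * ((T⁻¹ * (U * b * c)) * (c * T⁻¹))))))) := by
        rw [hau, hA]
    _ = P * (a ^ 2 * (U⁻¹ * ((b * (T⁻¹ * U)) * (b * (c ^ 2 * T⁻¹))))) := by
        simp only [pow_two]; group
    _ = P * (a ^ 2 * (U⁻¹ * ((U * b) * (b * (c ^ 2 * T⁻¹))))) := by rw [hbU]
    _ = (P * a ^ 2 * b ^ 2 * c ^ 2) * T⁻¹ := by simp only [pow_two]; group
    _ = T * T⁻¹ := by rw [h4]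
    _ = 1 := by group

/-- The computation behind the algebraic section `σ : π₁(N_g) → P_n(N_g)`: in a group with
elements `ρ₁, …, ρ_g, U, T` satisfying (i) `U` commutes with `ρ_l` for `l ≤ g - 2`,
(ii) `ρ_{g-1}⁻¹ U ρ_{g-1} = T⁻¹ U`, (iii) `U ρ_{g-1} ρ_g` commutes with `T`, and
(iv) `ρ₁² ⋯ ρ_g² = T`, one has
`ρ₁² ⋯ ρ_{g-3}² (ρ_{g-2} U⁻¹)² (U ρ_{g-1})² (ρ_g T⁻¹)² = 1`. -/
theorem statement15 {G : Type*} [Group G] (g : ℕ) (hg : 3 ≤ g)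
    (ρ : ℕ → G) (U T : G)
    (h1 : ∀ l, 1 ≤ l → l ≤ g - 2 → U * ρ l = ρ l * U)
    (h2 : (ρ (g - 1))⁻¹ * U * ρ (g - 1) = T⁻¹ * U)
    (h3 : (U * ρ (g - 1) * ρ g) * T = T * (U * ρ (g - 1) * ρ g))
    (h4 : (((List.range g).map fun i => ρ (i + 1) ^ 2).prod) = T) :
    (((List.range (g - 3)).map fun i => ρ (i + 1) ^ 2).prod) *
      (ρ (g - 2) * U⁻¹) ^ 2 * (U * ρ (g - 1)) ^ 2 * (ρ g * T⁻¹) ^ 2 = 1 := by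
  obtain ⟨k, rfl⟩ : ∃ k, g = k + 3 := ⟨g - 3, by omega⟩
  have e3 : k + 3 - 3 = k := by omega
  have e2 : k + 3 - 2 = k + 1 := by omega
  have e1 : k + 3 - 1 = k + 2 := by omega
  rw [e2] at h1
  rw [e1] at h2 h3
  rw [e3, e2, e1]
  have h4' : (((List.range k).map fun i => ρ (i + 1) ^ 2).prod)
      * ρ (k + 1) ^ 2 * ρ (k + 2) ^ 2 * ρ (k + 3) ^ 2 = T := by
    rw [show k + 3 = (k + 2) + 1 from rfl] at h4
    rw [List.range_succ, List.map_append, List.prod_append] at h4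
    rw [show k + 2 = (k + 1) + 1 from rfl] at h4
    rw [List.range_succ, List.map_append, List.prod_append] at h4
    rw [List.range_succ, List.map_append, List.prod_append] at h4
    simpa [mul_assoc] using h4
  exact statement15_aux _ _ _ _ _ _ (h1 (k + 1) (by omega) le_rfl) h2 h3 h4'
end
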